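/- arXiv:2206.06626 — 10 statements merged into one kernel-verified Lean document; each statement's English description precedes it below -/
import Mathlib

section
/- Let g be an automorphism of a finite thick generalized quadrangle S of order (s,t), let P_g and L_g be the sets of points and lines fixed by g, and let S_g be the incidence structure induced on (P_g, L_g). If |P_g| ≥ 2 and |L_g| ≥ 2, and S_g admits a group H of automorphisms acting transitively on P_g and transitively on L_g, then there exist integers s', t' ≥ 1 such that S_g is a generalized quadrangle of order (s', t'). -/
/-- A generalized quadrangle of order `(s, t)` given by an incidence relation `inc`
between points `P` and lines `L`. -/
structure IsGenQuadrangle {P L : Type*} (inc : P → L → Prop) (s t : ℕ) : Prop where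
  /-- every line is incident with exactly `s + 1` points -/
  pts_per_line : ∀ ℓ : L, Nat.card {x : P // inc x ℓ} = s + 1
  /-- every point is incident with exactly `t + 1` lines -/
  lines_per_pt : ∀ x : P, Nat.card {ℓ : L // inc x ℓ} = t + 1
  /-- two distinct points are incident with at most one common line -/
  unique_line : ∀ ⦃x y : P⦄, x ≠ y → ∀ ⦃ℓ m : L⦄,
      inc x ℓ → inc y ℓ → inc x m → inc y m → ℓ = m
  /-- for a nonincident point-line pair `(x, ℓ)` there is a unique pair `(y, m)`
  with `x I m`, `y I m` and `y I ℓ` -/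
  proj : ∀ ⦃x : P⦄ ⦃ℓ : L⦄, ¬ inc x ℓ →
      ∃! p : P × L, inc x p.2 ∧ inc p.1 p.2 ∧ inc p.1 ℓ

/-- If an automorphism `(σ, τ)` of a finite thick GQ of order `(s, t)` fixes at least
two points and at least two lines, and the induced fixed substructure admits a group of
automorphisms transitive on fixed points and on fixed lines, then the fixed substructure
is a generalized quadrangle of some order `(s', t')` with `s', t' ≥ 1`. -/
theorem stmt2 {P L : Type*} [Finite P] [Finite L] {inc : P → L → Prop} {s t : ℕ}
    (hGQ : IsGenQuadrangle inc s t) (hs : 2 ≤ s) (ht : 2 ≤ t)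
    (σ : Equiv.Perm P) (τ : Equiv.Perm L)
    (hpres : ∀ (x : P) (ℓ : L), inc (σ x) (τ ℓ) ↔ inc x ℓ)
    (h2P : 2 ≤ Nat.card {x : P // σ x = x})
    (h2L : 2 ≤ Nat.card {ℓ : L // τ ℓ = ℓ})
    (H : Type*) [Group H]
    [MulAction H {x : P // σ x = x}] [MulAction H {ℓ : L // τ ℓ = ℓ}]
    (hpresH : ∀ (h : H) (x : {x : P // σ x = x}) (ℓ : {ℓ : L // τ ℓ = ℓ}),
        inc (h • x).1 (h • ℓ).1 ↔ inc x.1 ℓ.1)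
    (htransP : MulAction.IsPretransitive H {x : P // σ x = x})
    (htransL : MulAction.IsPretransitive H {ℓ : L // τ ℓ = ℓ}) :
    ∃ s' t' : ℕ, 1 ≤ s' ∧ 1 ≤ t' ∧
      IsGenQuadrangle
        (fun (x : {x : P // σ x = x}) (ℓ : {ℓ : L // τ ℓ = ℓ}) => inc x.1 ℓ.1) s' t' := by
  classical
  have hPnt : Nontrivial {x : P // σ x = x} :=
    Finite.one_lt_card_iff_nontrivial.mp (by omega)
  have hLnt : Nontrivial {ℓ : L // τ ℓ = ℓ} :=
    Finite.one_lt_card_iff_nontrivial.mp (by omega)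
  -- the projection pair of a fixed nonincident point-line pair is fixed
  have key : ∀ (x : {x : P // σ x = x}) (ℓ : {ℓ : L // τ ℓ = ℓ}), ¬ inc x.1 ℓ.1 →
      ∃! p : {x : P // σ x = x} × {ℓ : L // τ ℓ = ℓ},
        inc x.1 p.2.1 ∧ inc p.1.1 p.2.1 ∧ inc p.1.1 ℓ.1 := by
    intro x ℓ hxl
    obtain ⟨p, hp, hu⟩ := hGQ.proj hxl
    have hfix : σ p.1 = p.1 ∧ τ p.2 = p.2 := by
      have h1 : inc x.1 (τ p.2) := by
        have := (hpres x.1 p.2).mpr hp.1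
        rwa [x.2] at this
      have h2 : inc (σ p.1) (τ p.2) := (hpres _ _).mpr hp.2.1
      have h3 : inc (σ p.1) ℓ.1 := by
        have := (hpres p.1 ℓ.1).mpr hp.2.2
        rwa [ℓ.2] at this
      have heq := hu (σ p.1, τ p.2) ⟨h1, h2, h3⟩
      exact ⟨congrArg Prod.fst heq, congrArg Prod.snd heq⟩
    refine ⟨(⟨p.1, hfix.1⟩, ⟨p.2, hfix.2⟩), ⟨hp.1, hp.2.1, hp.2.2⟩, ?_⟩
    rintro ⟨⟨y, hy⟩, ⟨m, hm⟩⟩ ⟨h1, h2, h3⟩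
    have heq := hu (y, m) ⟨h1, h2, h3⟩
    have e1 : y = p.1 := congrArg Prod.fst heq
    have e2 : m = p.2 := congrArg Prod.snd heq
    subst e1; subst e2
    rfl
  -- constancy of the number of fixed points per fixed line
  have constL : ∀ ℓ ℓ' : {ℓ : L // τ ℓ = ℓ},
      Nat.card {x : {x : P // σ x = x} // inc x.1 ℓ.1}
        = Nat.card {x : {x : P // σ x = x} // inc x.1 ℓ'.1} := by
    intro ℓ ℓ'
    obtain ⟨h, hh⟩ := htransL.exists_smul_eq ℓ ℓ'
    apply Nat.card_congr
    refine ⟨fun x => ⟨h • x.1, ?_⟩, fun x => ⟨h⁻¹ • x.1, ?_⟩, ?_, ?_⟩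
    · rw [← hh]; exact (hpresH h x.1 ℓ).mpr x.2
    · refine (hpresH h (h⁻¹ • x.1) ℓ).mp ?_
      rw [smul_inv_smul, hh]; exact x.2
    · intro x; exact Subtype.ext (inv_smul_smul h x.1)
    · intro x; exact Subtype.ext (smul_inv_smul h x.1)
  -- constancy of the number of fixed lines per fixed point
  have constP : ∀ x x' : {x : P // σ x = x},
      Nat.card {ℓ : {ℓ : L // τ ℓ = ℓ} // inc x.1 ℓ.1}
        = Nat.card {ℓ : {ℓ : L // τ ℓ = ℓ} // inc x'.1 ℓ.1} := by
    intro x x'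
    obtain ⟨h, hh⟩ := htransP.exists_smul_eq x x'
    apply Nat.card_congr
    refine ⟨fun ℓ => ⟨h • ℓ.1, ?_⟩, fun ℓ => ⟨h⁻¹ • ℓ.1, ?_⟩, ?_, ?_⟩
    · rw [← hh]; exact (hpresH h x ℓ.1).mpr ℓ.2
    · refine (hpresH h x (h⁻¹ • ℓ.1)).mp ?_
      rw [smul_inv_smul, hh]; exact ℓ.2
    · intro ℓ; exact Subtype.ext (inv_smul_smul h ℓ.1)
    · intro ℓ; exact Subtype.ext (smul_inv_smul h ℓ.1)
  -- every fixed line contains a fixed point, every fixed point lies on a fixed line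
  have exP : ∀ ℓ : {ℓ : L // τ ℓ = ℓ}, ∃ x : {x : P // σ x = x}, inc x.1 ℓ.1 := by
    intro ℓ
    obtain ⟨x₀⟩ := (inferInstance : Nonempty {x : P // σ x = x})
    by_cases hx : inc x₀.1 ℓ.1
    · exact ⟨x₀, hx⟩
    · obtain ⟨p, hp, -⟩ := key x₀ ℓ hx
      exact ⟨p.1, hp.2.2⟩
  have exL : ∀ x : {x : P // σ x = x}, ∃ ℓ : {ℓ : L // τ ℓ = ℓ}, inc x.1 ℓ.1 := by
    intro x
    obtain ⟨ℓ₀⟩ := (inferInstance : Nonempty {ℓ : L // τ ℓ = ℓ})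
    by_cases hx : inc x.1 ℓ₀.1
    · exact ⟨ℓ₀, hx⟩
    · obtain ⟨p, hp, -⟩ := key x ℓ₀ hx
      exact ⟨p.2, hp.1⟩
  -- each fixed line has at least 2 fixed points
  have hk2 : ∀ ℓ : {ℓ : L // τ ℓ = ℓ},
      2 ≤ Nat.card {x : {x : P // σ x = x} // inc x.1 ℓ.1} := by
    intro ℓ
    by_contra hlt
    push_neg at hlt
    have hsub : ∀ m : {ℓ : L // τ ℓ = ℓ},
        ∀ a b : {x : P // σ x = x}, inc a.1 m.1 → inc b.1 m.1 → a = b := by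
      intro m a b ha hb
      have h1 : Nat.card {x : {x : P // σ x = x} // inc x.1 m.1} = 1 := by
        obtain ⟨y, hy⟩ := exP m
        have : 0 < Nat.card {x : {x : P // σ x = x} // inc x.1 m.1} :=
          Nat.card_pos_iff.mpr ⟨⟨⟨y, hy⟩⟩, inferInstance⟩
        have h2 := constL m ℓ
        omega
      have hss := (Nat.card_eq_one_iff_unique.mp h1).1
      exact congrArg Subtype.val (hss.allEq ⟨a, ha⟩ ⟨b, hb⟩)
    obtain ⟨x, hx⟩ := exP ℓ
    obtain ⟨y, hy⟩ := exists_ne x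
    have hyℓ : ¬ inc y.1 ℓ.1 := fun h => hy (hsub ℓ y x h hx)
    obtain ⟨p, hp, -⟩ := key y ℓ hyℓ
    have hne : y ≠ p.1 := fun h => hyℓ (by rw [h]; exact hp.2.2)
    exact hne (hsub p.2 y p.1 hp.1 hp.2.1)
  -- each fixed point lies on at least 2 fixed lines
  have ht2 : ∀ x : {x : P // σ x = x},
      2 ≤ Nat.card {ℓ : {ℓ : L // τ ℓ = ℓ} // inc x.1 ℓ.1} := by
    intro x
    by_contra hlt
    push_neg at hlt
    have hsub : ∀ z : {x : P // σ x = x},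
        ∀ a b : {ℓ : L // τ ℓ = ℓ}, inc z.1 a.1 → inc z.1 b.1 → a = b := by
      intro z a b ha hb
      have h1 : Nat.card {ℓ : {ℓ : L // τ ℓ = ℓ} // inc z.1 ℓ.1} = 1 := by
        obtain ⟨m, hm⟩ := exL z
        have : 0 < Nat.card {ℓ : {ℓ : L // τ ℓ = ℓ} // inc z.1 ℓ.1} :=
          Nat.card_pos_iff.mpr ⟨⟨⟨m, hm⟩⟩, inferInstance⟩
        have h2 := constP z x
        omega
      have hss := (Nat.card_eq_one_iff_unique.mp h1).1
      exact congrArg Subtype.val (hss.allEq ⟨a, ha⟩ ⟨b, hb⟩)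
    obtain ⟨ℓ, hℓ⟩ := exL x
    obtain ⟨m, hm⟩ := exists_ne ℓ
    have hxm : ¬ inc x.1 m.1 := fun h => hm (hsub x m ℓ h hℓ)
    obtain ⟨p, hp, -⟩ := key x m hxm
    have hne : p.2 ≠ m := fun h => hxm (by rw [← h]; exact hp.1)
    exact hne (hsub p.1 p.2 m hp.2.1 hp.2.2)
  -- assemble
  obtain ⟨ℓ₀⟩ := (inferInstance : Nonempty {ℓ : L // τ ℓ = ℓ})
  obtain ⟨x₀⟩ := (inferInstance : Nonempty {x : P // σ x = x})
  refine ⟨Nat.card {x : {x : P // σ x = x} // inc x.1 ℓ₀.1} - 1,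
    Nat.card {ℓ : {ℓ : L // τ ℓ = ℓ} // inc x₀.1 ℓ.1} - 1,
    ?_, ?_, ?_, ?_, ?_, ?_⟩
  · have := hk2 ℓ₀; omega
  · have := ht2 x₀; omega
  · intro ℓ
    have h1 := constL ℓ ℓ₀
    have h2 := hk2 ℓ₀
    omega
  · intro x
    have h1 := constP x x₀
    have h2 := ht2 x₀
    omega
  · intro x y hxy ℓ m h1 h2 h3 h4
    exact Subtype.ext
      (hGQ.unique_line (fun h => hxy (Subtype.ext h)) h1 h2 h3 h4)
  · intro x ℓ h
    exact key x ℓ h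
end

section
/- Let g be an automorphism of a finite thick generalized quadrangle S of order (s,t), let P_g and L_g be the sets of points and lines fixed by g, and let S_g be the incidence structure induced on (P_g, L_g). If |P_g| = |L_g| ≥ 2 and S_g admits a group H of automorphisms acting transitively on P_g, then there exist integers s', t' ≥ 1 such that S_g is a generalized quadrangle of order (s', t'). -/
open Finset

section Aux

set_option linter.unusedSectionVars false

variable {P L : Type*} [Fintype P] [Fintype L] {inc : P → L → Prop}

/-- From a nonincident point `z` and line `ℓ`, if two lines through `z` both meet `ℓ`,
they coincide (and so do the meeting points). -/
private lemma GQmeet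
    (hproj : ∀ ⦃x : P⦄ ⦃ℓ : L⦄, ¬ inc x ℓ →
      ∃! p : P × L, inc x p.2 ∧ inc p.1 p.2 ∧ inc p.1 ℓ)
    {z : P} {ℓ : L} (hz : ¬ inc z ℓ) {m1 m2 : L} {w1 w2 : P}
    (h1 : inc z m1) (h2 : inc w1 m1) (h3 : inc w1 ℓ)
    (h4 : inc z m2) (h5 : inc w2 m2) (h6 : inc w2 ℓ) : m1 = m2 ∧ w1 = w2 := by
  obtain ⟨p, -, hu⟩ := hproj hz
  have e1 := hu (w1, m1) ⟨h1, h2, h3⟩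
  have e2 := hu (w2, m2) ⟨h4, h5, h6⟩
  rw [← e2] at e1
  exact ⟨congrArg Prod.snd e1, congrArg Prod.fst e1⟩

private lemma GQexists_pt
    (hproj : ∀ ⦃x : P⦄ ⦃ℓ : L⦄, ¬ inc x ℓ →
      ∃! p : P × L, inc x p.2 ∧ inc p.1 p.2 ∧ inc p.1 ℓ)
    (x0 : P) (ℓ : L) : ∃ y, inc y ℓ := by
  by_cases h : inc x0 ℓ
  · exact ⟨x0, h⟩
  · obtain ⟨⟨y, m⟩, ⟨-, -, h3⟩, -⟩ := hproj h
    exact ⟨y, h3⟩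

private lemma GQexists_ln
    (hproj : ∀ ⦃x : P⦄ ⦃ℓ : L⦄, ¬ inc x ℓ →
      ∃! p : P × L, inc x p.2 ∧ inc p.1 p.2 ∧ inc p.1 ℓ)
    (ℓ0 : L) (x : P) : ∃ m, inc x m := by
  by_cases h : inc x ℓ0
  · exact ⟨ℓ0, h⟩
  · obtain ⟨⟨y, m⟩, ⟨h1, -, -⟩, -⟩ := hproj h
    exact ⟨m, h1⟩

/-- Disjoint lines carry equally many points. -/
private lemma GQdisjoint_le
    (hproj : ∀ ⦃x : P⦄ ⦃ℓ : L⦄, ¬ inc x ℓ →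
      ∃! p : P × L, inc x p.2 ∧ inc p.1 p.2 ∧ inc p.1 ℓ)
    {ℓ m : L} (hdisj : ∀ u, ¬ (inc u ℓ ∧ inc u m)) :
    Nat.card {x // inc x ℓ} ≤ Nat.card {x // inc x m} := by
  have hx : ∀ x : {x // inc x ℓ}, ∃ w : {w // inc w m}, ∃ e, inc x.1 e ∧ inc w.1 e := by
    rintro ⟨x, hxl⟩
    have hnx : ¬ inc x m := fun h => hdisj x ⟨hxl, h⟩
    obtain ⟨⟨y, e⟩, ⟨h1, h2, h3⟩, -⟩ := hproj hnx
    exact ⟨⟨y, h3⟩, e, h1, h2⟩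
  choose f e he1 he2 using hx
  have hinj : Function.Injective f := by
    rintro ⟨x1, h1⟩ ⟨x2, h2⟩ hf
    have hw : ¬ inc (f ⟨x1, h1⟩).1 ℓ := fun h => hdisj _ ⟨h, (f ⟨x1, h1⟩).2⟩
    have h5 := he1 ⟨x2, h2⟩
    have h6 := he2 ⟨x2, h2⟩
    rw [← hf] at h6
    have := GQmeet hproj hw (he2 ⟨x1, h1⟩) (he1 ⟨x1, h1⟩) h1 h6 h5 h2
    exact Subtype.ext this.2
  exact Nat.card_le_card_of_injective f hinj

private lemma GQdisjoint_eq
    (hproj : ∀ ⦃x : P⦄ ⦃ℓ : L⦄, ¬ inc x ℓ →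
      ∃! p : P × L, inc x p.2 ∧ inc p.1 p.2 ∧ inc p.1 ℓ)
    {ℓ m : L} (hdisj : ∀ u, ¬ (inc u ℓ ∧ inc u m)) :
    Nat.card {x // inc x ℓ} = Nat.card {x // inc x m} :=
  le_antisymm (GQdisjoint_le hproj hdisj)
    (GQdisjoint_le hproj (fun u h => hdisj u ⟨h.2, h.1⟩))


set_option maxHeartbeats 2000000 in
private theorem aux_gq {P L : Type*} [Fintype P] [Fintype L] (inc : P → L → Prop)
    (huniq : ∀ ⦃x y : P⦄, x ≠ y → ∀ ⦃ℓ m : L⦄,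
      inc x ℓ → inc y ℓ → inc x m → inc y m → ℓ = m)
    (hproj : ∀ ⦃x : P⦄ ⦃ℓ : L⦄, ¬ inc x ℓ →
      ∃! p : P × L, inc x p.2 ∧ inc p.1 p.2 ∧ inc p.1 ℓ)
    (hPL : Fintype.card P = Fintype.card L)
    (h2 : 2 ≤ Fintype.card P)
    (hd : ∀ x y : P, Nat.card {ℓ : L // inc x ℓ} = Nat.card {ℓ : L // inc y ℓ}) :
    ∃ s' t' : ℕ, 1 ≤ s' ∧ 1 ≤ t' ∧ IsGenQuadrangle inc s' t' := by
  classical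
  obtain ⟨K, hK⟩ : ∃ K : L → ℕ, ∀ ℓ, K ℓ = (univ.filter (fun x => inc x ℓ)).card :=
    ⟨_, fun _ => rfl⟩
  obtain ⟨D, hD⟩ : ∃ D : P → ℕ, ∀ x, D x = (univ.filter (fun ℓ => inc x ℓ)).card :=
    ⟨_, fun _ => rfl⟩
  have hKnat : ∀ ℓ, Nat.card {x // inc x ℓ} = K ℓ := by
    intro ℓ; rw [hK, Nat.card_eq_fintype_card, Fintype.card_subtype]
  have hDnat : ∀ x, Nat.card {ℓ // inc x ℓ} = D x := by
    intro x; rw [hD, Nat.card_eq_fintype_card, Fintype.card_subtype]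
  obtain ⟨x0⟩ : Nonempty P := Fintype.card_pos_iff.mp (by omega)
  obtain ⟨ℓ0⟩ : Nonempty L := Fintype.card_pos_iff.mp (by omega)
  obtain ⟨a, hDa⟩ : ∃ a, ∀ x, D x = a :=
    ⟨D x0, fun x => by rw [← hDnat, ← hDnat]; exact hd x x0⟩
  have hK1 : ∀ ℓ, 1 ≤ K ℓ := by
    intro ℓ
    obtain ⟨y, hy⟩ := GQexists_pt hproj x0 ℓ
    rw [hK]
    exact card_pos.mpr ⟨y, by simpa using hy⟩
  have ha1 : 1 ≤ a := by
    obtain ⟨m, hm⟩ := GQexists_ln hproj ℓ0 x0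
    rw [← hDa x0, hD]
    exact card_pos.mpr ⟨m, by simpa using hm⟩
  have hflag : ∑ ℓ : L, K ℓ = ∑ x : P, D x := by
    simp only [hK, hD, Finset.card_filter]
    rw [Finset.sum_comm]
  -- every point lies on at least two lines
  have ha2 : 2 ≤ a := by
    by_contra hlt
    have ha1' : ∀ x, D x = 1 := fun x => by have := hDa x; omega
    have huL : ∀ (x : P) {m m' : L}, inc x m → inc x m' → m = m' := by
      intro x m m' hm hm'
      have hcle : (univ.filter (fun ℓ => inc x ℓ)).card ≤ 1 := by
        rw [← hD]; exact (ha1' x).le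
      exact Finset.card_le_one.mp hcle m (by simpa using hm) m' (by simpa using hm')
    obtain ⟨x, y, hxy⟩ := Fintype.exists_pair_of_one_lt_card (by omega : 1 < Fintype.card P)
    obtain ⟨m, hm⟩ := GQexists_ln hproj ℓ0 x
    obtain ⟨m', hm'⟩ := GQexists_ln hproj ℓ0 y
    by_cases hmm : m = m'
    · subst hmm
      obtain ⟨ℓ, hℓne⟩ :=
        Fintype.exists_ne_of_one_lt_card (by omega : 1 < Fintype.card L) m
      obtain ⟨z, hz⟩ := GQexists_pt hproj x0 ℓ
      have hnzm : ¬ inc z m := fun h => hℓne (huL z hz h)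
      obtain ⟨⟨w, m''⟩, ⟨p1, p2, p3⟩, -⟩ := hproj hnzm
      have h4 : m'' = ℓ := huL z p1 hz
      rw [h4] at p2
      exact hℓne (huL w p2 p3)
    · have hnxm' : ¬ inc x m' := fun h => hmm (huL x hm h)
      obtain ⟨⟨w, m''⟩, ⟨p1, p2, p3⟩, -⟩ := hproj hnxm'
      have h4 : m'' = m := huL x p1 hm
      rw [h4] at p2
      exact hmm (huL w p2 p3)
  -- auxiliary facts about singleton lines
  have hA : ∀ (ℓ : L) (y : P), univ.filter (fun x => inc x ℓ) = {y} →
      ∀ x, x ≠ y → ∃ m, inc x m ∧ inc y m := by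
    intro ℓ y hsing x hxy
    have hnx : ¬ inc x ℓ := by
      intro h
      have : x ∈ univ.filter (fun x => inc x ℓ) := by simpa using h
      rw [hsing, mem_singleton] at this
      exact hxy this
    obtain ⟨⟨w, m⟩, ⟨p1, p2, p3⟩, -⟩ := hproj hnx
    have hw : w = y := by
      have : w ∈ univ.filter (fun x => inc x ℓ) := by simpa using p3
      rwa [hsing, mem_singleton] at this
    exact ⟨m, p1, hw ▸ p2⟩
  have hB : ∀ (ℓ : L) (y : P), univ.filter (fun x => inc x ℓ) = {y} →
      ∀ f, ¬ inc y f → K f ≤ 1 := by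
    intro ℓ y hsing f hyf
    rw [hK]
    refine Finset.card_le_one.mpr ?_
    intro w1 hw1 w2 hw2
    have hw1f : inc w1 f := by simpa using hw1
    have hw2f : inc w2 f := by simpa using hw2
    have hne1 : w1 ≠ y := fun h => hyf (h ▸ hw1f)
    have hne2 : w2 ≠ y := fun h => hyf (h ▸ hw2f)
    obtain ⟨m1, hw1m, hym1⟩ := hA ℓ y hsing w1 hne1
    obtain ⟨m2, hw2m, hym2⟩ := hA ℓ y hsing w2 hne2
    exact (GQmeet hproj hyf hym1 hw1m hw1f hym2 hw2m hw2f).2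
  -- every line carries at least two points
  have hK2 : ∀ ℓ, 2 ≤ K ℓ := by
    intro ℓ1
    by_contra hlt
    have hKone : (univ.filter (fun x => inc x ℓ1)).card = 1 := by
      rw [← hK]; have := hK1 ℓ1; omega
    obtain ⟨y, hy⟩ := Finset.card_eq_one.mp hKone
    obtain ⟨x, hxy⟩ :=
      Fintype.exists_ne_of_one_lt_card (by omega : 1 < Fintype.card P) y
    obtain ⟨mxy, hxm, hym⟩ := hA ℓ1 y hy x hxy
    -- a line through x avoiding y
    have hex : ∃ e, inc x e ∧ ¬ inc y e := by
      by_contra hall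
      push_neg at hall
      have hsub : univ.filter (fun ℓ => inc x ℓ) ⊆
          univ.filter (fun e => inc x e ∧ inc y e) := by
        intro e he
        simp only [mem_filter, mem_univ, true_and] at he ⊢
        exact ⟨he, hall e he⟩
      have hle : (univ.filter (fun e => inc x e ∧ inc y e)).card ≤ 1 := by
        refine Finset.card_le_one.mpr ?_
        intro e1 h1 e2 h2
        simp only [mem_filter, mem_univ, true_and] at h1 h2
        exact huniq hxy h1.1 h1.2 h2.1 h2.2
      have hcard := (Finset.card_le_card hsub).trans hle
      rw [← hD, hDa] at hcard
      omega
    obtain ⟨e, hxe, hnye⟩ := hex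
    have hKe1 : K e ≤ 1 := hB ℓ1 y hy e hnye
    have hse : univ.filter (fun u => inc u e) = {x} := by
      have hxmem : x ∈ univ.filter (fun u => inc u e) := by simpa using hxe
      have hle1 : (univ.filter (fun u => inc u e)).card ≤ 1 := by rw [← hK]; exact hKe1
      refine Finset.eq_singleton_iff_unique_mem.mpr ⟨hxmem, ?_⟩
      exact fun b hb => Finset.card_le_one.mp hle1 b hb x hxmem
    have hC : ∀ f, f ≠ mxy → K f ≤ 1 := by
      intro f hfne
      by_cases hyf : inc y f
      · have hnxf : ¬ inc x f := fun hxf => hfne (huniq hxy hxf hyf hxm hym)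
        exact hB e x hse f hnxf
      · exact hB ℓ1 y hy f hyf
    have h1 : K mxy + ∑ f ∈ univ.erase mxy, K f = ∑ ℓ : L, K ℓ :=
      Finset.add_sum_erase _ K (mem_univ mxy)
    have h2' : ∑ f ∈ univ.erase mxy, K f ≤ (univ.erase mxy).card := by
      calc ∑ f ∈ univ.erase mxy, K f ≤ ∑ _f ∈ univ.erase mxy, 1 :=
            Finset.sum_le_sum (fun f hf => hC f (Finset.ne_of_mem_erase hf))
        _ = (univ.erase mxy).card := by simp
    have hcardE : (univ.erase mxy).card = Fintype.card L - 1 := by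
      rw [Finset.card_erase_of_mem (mem_univ _), Finset.card_univ]
    have hKxy : K mxy ≤ Fintype.card P := by
      rw [hK, ← Finset.card_univ]
      exact Finset.card_filter_le _ _
    have hDsum : ∑ x : P, D x = Fintype.card P * a := by
      rw [Finset.sum_congr rfl (fun x _ => hDa x)]
      simp [Finset.card_univ, mul_comm]
    have hmul : Fintype.card P * 2 ≤ Fintype.card P * a :=
      Nat.mul_le_mul_left _ ha2
    rw [hflag, hDsum] at h1
    omega
  -- all lines carry equally many points
  have hmain : ∀ e f : L, K e = K f := by
    have hdisjKeq : ∀ e f : L, (∀ u, ¬ (inc u e ∧ inc u f)) → K e = K f := by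
      intro e f hdf
      rw [← hKnat, ← hKnat]
      exact GQdisjoint_eq hproj hdf
    rcases Nat.lt_or_ge a 3 with ha3 | ha3
    · -- a = 2 : grid case
      have ha2' : a = 2 := by omega
      intro e f
      by_contra hne
      have hlns : ∀ x : P, ∃ m1 m2 : L, m1 ≠ m2 ∧ inc x m1 ∧ inc x m2 ∧
          ∀ m, inc x m → m = m1 ∨ m = m2 := by
        intro x
        have hcd : (univ.filter (fun ℓ => inc x ℓ)).card = 2 := by
          rw [← hD, hDa, ha2']
        obtain ⟨m1, m2, h12, hset⟩ := Finset.card_eq_two.mp hcd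
        have hm1 : inc x m1 := by
          have : m1 ∈ univ.filter (fun ℓ => inc x ℓ) := by
            rw [hset]; exact mem_insert_self _ _
          simpa using this
        have hm2 : inc x m2 := by
          have : m2 ∈ univ.filter (fun ℓ => inc x ℓ) := by
            rw [hset]; exact mem_insert_of_mem (mem_singleton_self _)
          simpa using this
        refine ⟨m1, m2, h12, hm1, hm2, ?_⟩
        intro m hm
        have : m ∈ univ.filter (fun ℓ => inc x ℓ) := by simpa using hm
        rw [hset] at this
        simpa using this
      have hmeets : ∀ g g' : L, K g ≠ K g' → ∃ w, inc w g ∧ inc w g' := by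
        intro g g' hKne
        by_contra hno
        push_neg at hno
        exact hKne (hdisjKeq g g' (fun u hu => hno u hu.1 hu.2))
      have hS1 : ∀ (g1 g2 : L) (z : P), g1 ≠ g2 → K g1 = K g2 →
          inc z g1 → inc z g2 → False := by
        intro g1 g2 z h12 hKeq hz1 hz2
        obtain ⟨g, hgne⟩ : ∃ g, K g ≠ K g1 := by
          by_cases h : K e = K g1
          · exact ⟨f, fun hh => hne (h.trans hh.symm)⟩
          · exact ⟨e, h⟩
        have hgg1 : g ≠ g1 := fun hh => hgne (hh ▸ rfl)
        have hgg2 : g ≠ g2 := fun hh => hgne (by rw [hh, ← hKeq])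
        have hnzg : ¬ inc z g := by
          intro hzg
          obtain ⟨m1, m2, hm12, -, -, hall⟩ := hlns z
          rcases hall g1 hz1 with h1 | h1 <;> rcases hall g2 hz2 with h2 | h2 <;>
            rcases hall g hzg with h3 | h3 <;>
            first
              | exact h12 (h1.trans h2.symm)
              | exact hgg1 (h3.trans h1.symm)
              | exact hgg2 (h3.trans h2.symm)
        obtain ⟨w1, hw1g, hw1g1⟩ := hmeets g g1 hgne
        obtain ⟨w2, hw2g, hw2g2⟩ := hmeets g g2 (fun hh => hgne (hh.trans hKeq.symm))
        exact h12 (GQmeet hproj hnzg hz1 hw1g1 hw1g hz2 hw2g2 hw2g).1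
      have hS3 : ∀ g : L, K g = K e ∨ K g = K f := by
        intro g
        by_contra hg
        push_neg at hg
        obtain ⟨hg1, hg2⟩ := hg
        obtain ⟨y1, hy1e, hy1f⟩ := hmeets e f hne
        obtain ⟨y2, hy2e, hy2g⟩ := hmeets e g (fun hh => hg1 hh.symm)
        obtain ⟨y3, hy3f, hy3g⟩ := hmeets f g (fun hh => hg2 hh.symm)
        have hef : e ≠ f := fun hh => hne (hh ▸ rfl)
        have heg : e ≠ g := fun hh => hg1 (hh ▸ rfl)
        have hfg : f ≠ g := fun hh => hg2 (hh ▸ rfl)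
        have hny1g : ¬ inc y1 g := by
          intro hzg
          obtain ⟨m1, m2, hm12, -, -, hall⟩ := hlns y1
          rcases hall e hy1e with h1 | h1 <;> rcases hall f hy1f with h2 | h2 <;>
            rcases hall g hzg with h3 | h3 <;>
            first
              | exact hef (h1.trans h2.symm)
              | exact heg (h1.trans h3.symm)
              | exact hfg (h2.trans h3.symm)
        exact hef (GQmeet hproj hny1g hy1e hy2e hy2g hy1f hy3f hy3g).1
      -- partition of the points by the lines of size K u
      have key : ∀ u v : L, K u ≠ K v → (∀ g, K g = K u ∨ K g = K v) →
          Fintype.card P = (univ.filter (fun g => K g = K u)).card * K u := by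
        intro u v huv hall
        have hone : ∀ x : P, ∃ g, K g = K u ∧ inc x g := by
          intro x
          obtain ⟨m1, m2, h12, hm1, hm2, -⟩ := hlns x
          have hKm : K m1 ≠ K m2 := fun hh => hS1 m1 m2 x h12 hh hm1 hm2
          rcases hall m1 with h | h
          · exact ⟨m1, h, hm1⟩
          · rcases hall m2 with h' | h'
            · exact ⟨m2, h', hm2⟩
            · exact absurd (h.trans h'.symm) hKm
        have hcover : (univ : Finset P) =
            (univ.filter (fun g => K g = K u)).biUnion
              (fun g => univ.filter (fun x => inc x g)) := by
          ext x
          simp only [mem_univ, true_iff, mem_biUnion, mem_filter, true_and]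
          obtain ⟨g, hg1, hg2⟩ := hone x
          exact ⟨g, hg1, hg2⟩
        have hdisjp : ∀ g1 ∈ univ.filter (fun g => K g = K u),
            ∀ g2 ∈ univ.filter (fun g => K g = K u), g1 ≠ g2 →
            Disjoint (univ.filter (fun x => inc x g1))
              (univ.filter (fun x => inc x g2)) := by
          intro g1 hg1 g2 hg2 hne12
          simp only [mem_filter, mem_univ, true_and] at hg1 hg2
          refine Finset.disjoint_left.mpr ?_
          intro x hx1 hx2
          simp only [mem_filter, mem_univ, true_and] at hx1 hx2
          exact hS1 g1 g2 x hne12 (hg1.trans hg2.symm) hx1 hx2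
        calc Fintype.card P = (univ : Finset P).card := (Finset.card_univ).symm
          _ = ((univ.filter (fun g => K g = K u)).biUnion
                (fun g => univ.filter (fun x => inc x g))).card := by rw [← hcover]
          _ = ∑ g ∈ univ.filter (fun g => K g = K u),
                (univ.filter (fun x => inc x g)).card := Finset.card_biUnion hdisjp
          _ = ∑ g ∈ univ.filter (fun g => K g = K u), K u := by
                refine Finset.sum_congr rfl ?_
                intro g hg
                simp only [mem_filter, mem_univ, true_and] at hg
                rw [← hK, hg]
          _ = (univ.filter (fun g => K g = K u)).card * K u := by
                rw [Finset.sum_const, smul_eq_mul]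
      have hcount_e := key e f hne hS3
      have hcount_f := key f e (fun hh => hne hh.symm) (fun g => (hS3 g).symm)
      have hunion : (univ.filter (fun g => K g = K e)) ∪
          (univ.filter (fun g => K g = K f)) = univ := by
        ext g
        simp only [mem_union, mem_filter, mem_univ, true_and, iff_true]
        exact hS3 g
      have hdisjef : Disjoint (univ.filter (fun g => K g = K e))
          (univ.filter (fun g => K g = K f)) := by
        refine Finset.disjoint_left.mpr ?_
        intro g hg1 hg2
        simp only [mem_filter, mem_univ, true_and] at hg1 hg2
        exact hne (hg1 ▸ hg2 ▸ rfl : K e = K f)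
      have hsumef : (univ.filter (fun g => K g = K e)).card +
          (univ.filter (fun g => K g = K f)).card = Fintype.card L := by
        rw [← Finset.card_union_of_disjoint hdisjef, hunion, Finset.card_univ]
      -- arithmetic contradiction
      set α := (univ.filter (fun g => K g = K e)).card with hα
      set β := (univ.filter (fun g => K g = K f)).card with hβ
      set p := K e with hp
      set q := K f with hq
      have hp2 : 2 ≤ p := hK2 e
      have hq2 : 2 ≤ q := hK2 f
      have hn2 : 2 ≤ Fintype.card P := h2
      have e1 : Fintype.card P = α * p := hcount_e
      have e2 : Fintype.card P = β * q := hcount_f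
      have e3 : α + β = Fintype.card P := by rw [hsumef, ← hPL]
      have hmulid : Fintype.card P * (p * q) = Fintype.card P * (q + p) := by
        calc Fintype.card P * (p * q) = (α + β) * (p * q) := by rw [e3]
          _ = (α * p) * q + (β * q) * p := by ring
          _ = Fintype.card P * q + Fintype.card P * p := by rw [← e1, ← e2]
          _ = Fintype.card P * (q + p) := by ring
      have hpq : p * q = q + p := Nat.eq_of_mul_eq_mul_left (by omega) hmulid
      rcases Nat.lt_or_ge p q with hlt | hge
      · have h2q : 2 * q ≤ p * q := Nat.mul_le_mul_right q hp2
        omega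
      · have hlt : q < p := lt_of_le_of_ne hge (fun hh => hne hh.symm)
        have h2p : 2 * p ≤ q * p := Nat.mul_le_mul_right p hq2
        rw [Nat.mul_comm] at hpq
        omega
    · -- a ≥ 3
      intro e f
      by_cases hef : e = f
      · rw [hef]
      by_cases hmeet : ∃ y, inc y e ∧ inc y f
      · obtain ⟨y, hye, hyf⟩ := hmeet
        have hw : ∃ w, ¬ inc w e ∧ ¬ inc w f := by
          by_contra hall
          push_neg at hall
          obtain ⟨z, hze', hzy⟩ := Finset.exists_mem_ne
            (by rw [← hK]; have := hK2 e; omega :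
              1 < (univ.filter (fun x => inc x e)).card) y
          have hze : inc z e := by simpa using hze'
          have hnzf : ¬ inc z f := fun h => hef (huniq hzy hze hye h hyf)
          obtain ⟨m, hm', hme⟩ := Finset.exists_mem_ne
            (by rw [← hD, hDa]; omega :
              1 < (univ.filter (fun ℓ => inc z ℓ)).card) e
          have hzm : inc z m := by simpa using hm'
          obtain ⟨u, hu', huz⟩ := Finset.exists_mem_ne
            (by rw [← hK]; have := hK2 m; omega :
              1 < (univ.filter (fun x => inc x m)).card) z
          have hum : inc u m := by simpa using hu'
          have hnue : ¬ inc u e := fun h => hme (huniq huz hum hzm h hze)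
          have huf : inc u f := hall u hnue
          exact hme (GQmeet hproj hnzf hzm hum huf hze hye hyf).1
        obtain ⟨w, hwe, hwf⟩ := hw
        set S := univ.filter (fun m => inc w m) with hS
        have hScard : 3 ≤ S.card := by rw [hS, ← hD, hDa]; omega
        set A := S.filter (fun m => ∃ u, inc u m ∧ inc u e) with hAdef
        set B := S.filter (fun m => ∃ u, inc u m ∧ inc u f) with hBdef
        have hAle : A.card ≤ 1 := by
          refine Finset.card_le_one.mpr ?_
          intro m1 h1 m2 h2
          simp only [hAdef, hS, mem_filter, mem_univ, true_and] at h1 h2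
          obtain ⟨hwm1, u1, hu1m, hu1e⟩ := h1
          obtain ⟨hwm2, u2, hu2m, hu2e⟩ := h2
          exact (GQmeet hproj hwe hwm1 hu1m hu1e hwm2 hu2m hu2e).1
        have hBle : B.card ≤ 1 := by
          refine Finset.card_le_one.mpr ?_
          intro m1 h1 m2 h2
          simp only [hBdef, hS, mem_filter, mem_univ, true_and] at h1 h2
          obtain ⟨hwm1, u1, hu1m, hu1f⟩ := h1
          obtain ⟨hwm2, u2, hu2m, hu2f⟩ := h2
          exact (GQmeet hproj hwf hwm1 hu1m hu1f hwm2 hu2m hu2f).1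
        have hexm : ∃ m ∈ S, m ∉ A ∪ B := by
          by_contra hall
          push_neg at hall
          have hsub : S ⊆ A ∪ B := fun m hm => hall m hm
          have hle := Finset.card_le_card hsub
          have hAB := Finset.card_union_le A B
          omega
        obtain ⟨m, hmS, hmAB⟩ := hexm
        have hwm : inc w m := by simpa [hS] using hmS
        have hnA : ¬ ∃ u, inc u m ∧ inc u e := fun hu =>
          hmAB (Finset.mem_union_left _ (by simp only [hAdef, mem_filter]; exact ⟨hmS, hu⟩))
        have hnB : ¬ ∃ u, inc u m ∧ inc u f := fun hu =>
          hmAB (Finset.mem_union_right _ (by simp only [hBdef, mem_filter]; exact ⟨hmS, hu⟩))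
        have h1 : K e = K m :=
          hdisjKeq e m (fun u hu => hnA ⟨u, hu.2, hu.1⟩)
        have h2' : K m = K f :=
          hdisjKeq m f (fun u hu => hnB ⟨u, hu.1, hu.2⟩)
        exact h1.trans h2'
      · push_neg at hmeet
        exact hdisjKeq e f (fun u hu => hmeet u hu.1 hu.2)
  -- assemble the generalized quadrangle
  refine ⟨K ℓ0 - 1, a - 1, ?_, ?_, ?_, ?_, huniq, hproj⟩
  · have := hK2 ℓ0; omega
  · omega
  · intro ℓ
    rw [hKnat, hmain ℓ ℓ0]
    have := hK2 ℓ0; omega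
  · intro x
    rw [hDnat, hDa]
    omega

end Aux

/-- If an automorphism `(σ, τ)` of a finite thick GQ of order `(s, t)` fixes equally
many points and lines, at least two of each, and the induced fixed substructure admits a
group of automorphisms transitive on the fixed points, then the fixed substructure is a
generalized quadrangle of some order `(s', t')` with `s', t' ≥ 1`. -/
theorem stmt3 {P L : Type*} [Finite P] [Finite L] {inc : P → L → Prop} {s t : ℕ}
    (hGQ : IsGenQuadrangle inc s t) (hs : 2 ≤ s) (ht : 2 ≤ t)
    (σ : Equiv.Perm P) (τ : Equiv.Perm L)
    (hpres : ∀ (x : P) (ℓ : L), inc (σ x) (τ ℓ) ↔ inc x ℓ)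
    (hcard : Nat.card {x : P // σ x = x} = Nat.card {ℓ : L // τ ℓ = ℓ})
    (h2P : 2 ≤ Nat.card {x : P // σ x = x})
    (H : Type*) [Group H]
    [MulAction H {x : P // σ x = x}] [MulAction H {ℓ : L // τ ℓ = ℓ}]
    (hpresH : ∀ (h : H) (x : {x : P // σ x = x}) (ℓ : {ℓ : L // τ ℓ = ℓ}),
        inc (h • x).1 (h • ℓ).1 ↔ inc x.1 ℓ.1)
    (htransP : MulAction.IsPretransitive H {x : P // σ x = x}) :
    ∃ s' t' : ℕ, 1 ≤ s' ∧ 1 ≤ t' ∧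
      IsGenQuadrangle
        (fun (x : {x : P // σ x = x}) (ℓ : {ℓ : L // τ ℓ = ℓ}) => inc x.1 ℓ.1) s' t' := by
  classical
  haveI : Fintype {x : P // σ x = x} := Fintype.ofFinite _
  haveI : Fintype {ℓ : L // τ ℓ = ℓ} := Fintype.ofFinite _
  have huniq' : ∀ ⦃x y : {x : P // σ x = x}⦄, x ≠ y →
      ∀ ⦃ℓ m : {ℓ : L // τ ℓ = ℓ}⦄, inc x.1 ℓ.1 → inc y.1 ℓ.1 → inc x.1 m.1 →
        inc y.1 m.1 → ℓ = m := by
    rintro ⟨x, hx⟩ ⟨y, hy⟩ hxy ⟨l, hl⟩ ⟨m, hm⟩ i1 i2 i3 i4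
    exact Subtype.ext (hGQ.unique_line (fun h => hxy (Subtype.ext h)) i1 i2 i3 i4)
  have hproj' : ∀ ⦃x : {x : P // σ x = x}⦄ ⦃ℓ : {ℓ : L // τ ℓ = ℓ}⦄, ¬ inc x.1 ℓ.1 →
      ∃! p : {x : P // σ x = x} × {ℓ : L // τ ℓ = ℓ},
        inc x.1 p.2.1 ∧ inc p.1.1 p.2.1 ∧ inc p.1.1 ℓ.1 := by
    rintro ⟨x, hx⟩ ⟨l, hl⟩ hni
    obtain ⟨⟨y, m⟩, ⟨h1, h2, h3⟩, hu⟩ := hGQ.proj hni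
    have hfix : (σ y, τ m) = (y, m) := by
      apply hu
      refine ⟨?_, ?_, ?_⟩
      · have h' := hpres x m
        rw [hx] at h'
        exact h'.mpr h1
      · exact (hpres y m).mpr h2
      · have h' := hpres y l
        rw [hl] at h'
        exact h'.mpr h3
    have hyfix : σ y = y := congrArg Prod.fst hfix
    have hmfix : τ m = m := congrArg Prod.snd hfix
    refine ⟨(⟨y, hyfix⟩, ⟨m, hmfix⟩), ⟨h1, h2, h3⟩, ?_⟩
    rintro ⟨⟨y', hy'⟩, ⟨m', hm'⟩⟩ ⟨g1, g2, g3⟩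
    have heq := hu (y', m') ⟨g1, g2, g3⟩
    have h5 : y' = y := congrArg Prod.fst heq
    have h6 : m' = m := congrArg Prod.snd heq
    exact Prod.ext (Subtype.ext h5) (Subtype.ext h6)
  have hd : ∀ x y : {x : P // σ x = x},
      Nat.card {ℓ : {ℓ : L // τ ℓ = ℓ} // inc x.1 ℓ.1} =
      Nat.card {ℓ : {ℓ : L // τ ℓ = ℓ} // inc y.1 ℓ.1} := by
    intro x y
    obtain ⟨h, hh⟩ := htransP.exists_smul_eq (M := H) x y
    refine Nat.card_congr ?_
    refine ⟨fun ℓ => ⟨h • ℓ.1, ?_⟩, fun ℓ => ⟨h⁻¹ • ℓ.1, ?_⟩, ?_, ?_⟩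
    · have h' := hpresH h x ℓ.1
      rw [hh] at h'
      exact h'.mpr ℓ.2
    · have hxy : h⁻¹ • y = x := by rw [← hh, inv_smul_smul]
      have h' := hpresH h⁻¹ y ℓ.1
      rw [hxy] at h'
      exact h'.mpr ℓ.2
    · intro ℓ
      apply Subtype.ext
      simp
    · intro ℓ
      apply Subtype.ext
      simp
  have hcard' : Fintype.card {x : P // σ x = x} = Fintype.card {ℓ : L // τ ℓ = ℓ} := by
    rw [← Nat.card_eq_fintype_card, ← Nat.card_eq_fintype_card]
    exact hcard
  have h2' : 2 ≤ Fintype.card {x : P // σ x = x} := by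
    rw [← Nat.card_eq_fintype_card]
    exact h2P
  exact aux_gq _ huniq' hproj' hcard' h2' hd
end

section
/- Let q = p^f ≥ 4 be a prime power and let X = PSL(2,q). Then any two elements of order 2 in X are conjugate in X, and the number of elements of order 2 in X equals q² − 1 if p = 2, equals q(q+1)/2 if q ≡ 1 (mod 4), and equals q(q−1)/2 if q ≡ 3 (mod 4). -/
set_option linter.unusedSectionVars false
set_option linter.unreachableTactic false
set_option linter.unusedTactic false
set_option linter.unnecessarySeqFocus false
set_option linter.unusedVariables false
set_option maxHeartbeats 1000000

open Matrix
open scoped MatrixGroups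

section helpers

variable {F : Type*} [Field F] [Fintype F] [DecidableEq F]

instance : Fact (Even (Fintype.card (Fin 2))) := ⟨⟨1, rfl⟩⟩

local notation "SL2" F => Matrix.SpecialLinearGroup (Fin 2) F

/-- every element of a finite field is a sum of two squares -/
lemma my_sq_add_sq (x : F) : ∃ a b : F, a ^ 2 + b ^ 2 = x := by
  rcases Nat.even_or_odd (Fintype.card F) with he | ho
  · have hchar : ringChar F = 2 :=
      (FiniteField.even_card_iff_char_two).mpr (Nat.even_iff.mp he)
    haveI : CharP F 2 := by rw [← hchar]; exact ringChar.charP F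
    have h2 : (2 : F) = 0 := CharTwo.two_eq_zero
    have hinj : Function.Injective (fun a : F => a ^ 2) := by
      intro a b hab
      simp only at hab
      have hs : (a - b) ^ 2 = 0 := by linear_combination hab + (b*b - a*b) * h2
      have := pow_eq_zero_iff (n := 2) (by norm_num) |>.mp hs
      exact sub_eq_zero.mp this
    have hsurj := Finite.injective_iff_surjective.mp hinj
    obtain ⟨a, ha⟩ := hsurj x
    exact ⟨a, 0, by simpa using ha⟩
  · obtain ⟨a, b, hab⟩ : ∃ a b, Polynomial.eval a (Polynomial.X ^ 2)
        + Polynomial.eval b (Polynomial.X ^ 2 - Polynomial.C x) = 0 :=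
      FiniteField.exists_root_sum_quadratic (Polynomial.degree_X_pow 2)
        (Polynomial.degree_X_pow_sub_C (by norm_num) _) (Nat.odd_iff.mp ho)
    refine ⟨a, b, ?_⟩
    simp only [Polynomial.eval_pow, Polynomial.eval_X, Polynomial.eval_sub,
      Polynomial.eval_C] at hab
    linear_combination hab

def JSL (F : Type*) [Field F] : Matrix.SpecialLinearGroup (Fin 2) F :=
  ⟨!![0, -1; 1, 0], by simp [Matrix.det_fin_two_of]⟩

lemma isConj_JSL (g : Matrix.SpecialLinearGroup (Fin 2) F)
    (htr : Matrix.trace (g : Matrix (Fin 2) (Fin 2) F) = 0) (h1 : g ≠ 1) :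
    IsConj (JSL F) g := by
  obtain ⟨a, b, c, d, hg0⟩ : ∃ a b c d, (g : Matrix (Fin 2) (Fin 2) F) = !![a, b; c, d] :=
    ⟨_, _, _, _, Matrix.eta_fin_two _⟩
  have hd : d = -a := by
    rw [hg0, Matrix.trace_fin_two_of] at htr; linear_combination htr
  have hg : (g : Matrix (Fin 2) (Fin 2) F) = !![a, b; c, -a] := by rw [hg0, hd]
  have hdet : a * (-a) - b * c = 1 := by
    have := g.2
    rw [hg, Matrix.det_fin_two_of] at this
    exact this
  -- construct an initial conjugating matrix with nonzero determinant
  obtain ⟨m₀, hm₀, hd₀⟩ : ∃ m₀ : Matrix (Fin 2) (Fin 2) F,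
      (g : Matrix (Fin 2) (Fin 2) F) * m₀ = m₀ * (JSL F : Matrix (Fin 2) (Fin 2) F)
        ∧ m₀.det ≠ 0 := by
    by_cases hc0 : c ≠ 0
    · refine ⟨!![1, a; 0, c], ?_, by simp [Matrix.det_fin_two_of, hc0]⟩
      rw [hg, JSL]
      ext i j
      fin_cases i <;> fin_cases j <;>
        simp [Matrix.mul_apply, Fin.sum_univ_two] <;>
        first
          | ring1
          | linear_combination hdet | linear_combination -hdet
          | linear_combination 2*hdet | linear_combination -2*hdet
          | linear_combination hdet + b*hc0 | linear_combination -hdet - b*hc0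
          | linear_combination -hdet - 2*b*hc0 | linear_combination hdet + 2*b*hc0
    push_neg at hc0
    by_cases hb0 : b ≠ 0
    · refine ⟨!![0, b; 1, -a], ?_, by simp [Matrix.det_fin_two_of, hb0]⟩
      rw [hg, JSL]
      ext i j
      fin_cases i <;> fin_cases j <;>
        simp [Matrix.mul_apply, Fin.sum_univ_two, hc0] <;>
        first
          | ring1
          | linear_combination hdet | linear_combination -hdet
          | linear_combination 2*hdet | linear_combination -2*hdet
          | linear_combination hdet + b*hc0 | linear_combination -hdet - b*hc0
          | linear_combination -hdet - 2*b*hc0 | linear_combination hdet + 2*b*hc0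
    · push_neg at hb0
      -- b = c = 0, so a * -a = 1
      have haa : a * a = -1 := by rw [hb0, hc0] at hdet; linear_combination -hdet
      have ha0 : a ≠ 0 := by
        intro h
        exact one_ne_zero (α := F) (by linear_combination haa - a * h)
      have h2 : (2 : F) ≠ 0 := by
        intro h2
        apply h1
        have hneg : (-1 : F) = 1 := by linear_combination -h2
        have ha1 : a = 1 := by
          have hs : (a - 1) ^ 2 = 0 := by linear_combination haa - a * h2
          have := pow_eq_zero_iff (n := 2) (by norm_num) |>.mp hs
          linear_combination this
        apply Subtype.ext
        rw [hg, hb0, hc0, ha1]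
        ext i j
        fin_cases i <;> fin_cases j <;>
          simp <;> first | exact hneg | linear_combination -h2
      refine ⟨!![1, a; 1, -a], ?_, ?_⟩
      · rw [hg, JSL]
        ext i j
        fin_cases i <;> fin_cases j <;>
          simp [Matrix.mul_apply, Fin.sum_univ_two, hb0, hc0] <;>
          first
            | ring1
            | linear_combination haa | linear_combination -haa
            | linear_combination 2*haa | linear_combination -2*haa
      · simp only [Matrix.det_fin_two_of]
        intro h
        have h2a : (2 : F) * a = 0 := by linear_combination -h
        rcases mul_eq_zero.mp h2a with h' | h'
        · exact h2 h'
        · exact ha0 h'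
  -- adjust determinant to 1 using the centralizer of J
  obtain ⟨u, v, huv⟩ := my_sq_add_sq (m₀.det⁻¹)
  set c0 : Matrix (Fin 2) (Fin 2) F := !![u, -v; v, u] with hc0def
  have hdetc0 : c0.det = m₀.det⁻¹ := by
    rw [hc0def, Matrix.det_fin_two_of]; linear_combination huv
  have hcomm : (JSL F : Matrix (Fin 2) (Fin 2) F) * c0 = c0 * (JSL F : Matrix (Fin 2) (Fin 2) F) := by
    rw [hc0def, JSL]
    ext i j
    fin_cases i <;> fin_cases j <;> simp [Matrix.mul_apply, Fin.sum_univ_two]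
  have hmdet : (m₀ * c0).det = 1 := by
    rw [Matrix.det_mul, hdetc0, mul_inv_cancel₀ hd₀]
  set mSL : Matrix.SpecialLinearGroup (Fin 2) F := ⟨m₀ * c0, hmdet⟩ with hmSL
  rw [isConj_iff]
  refine ⟨mSL, ?_⟩
  rw [mul_inv_eq_iff_eq_mul]
  apply Subtype.ext
  push_cast
  show (m₀ * c0) * (JSL F : Matrix (Fin 2) (Fin 2) F) = (g : Matrix (Fin 2) (Fin 2) F) * (m₀ * c0)
  rw [mul_assoc, ← hcomm, ← mul_assoc, ← hm₀, mul_assoc]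

lemma mem_center_iff' {x : SL2 F} :
    x ∈ Subgroup.center (SL2 F) ↔ x = 1 ∨ x = -1 := by
  rw [Matrix.SpecialLinearGroup.mem_center_iff]
  constructor
  · rintro ⟨r, hr1, hr2⟩
    rw [Fintype.card_fin] at hr1
    have : r = 1 ∨ r = -1 := by
      rcases mul_self_eq_one_iff.mp (by linear_combination hr1) with h | h
      · exact Or.inl h
      · exact Or.inr h
    rcases this with h | h
    · left
      apply Subtype.ext
      rw [← hr2, h]
      simp
    · right
      apply Subtype.ext
      rw [← hr2, h, Matrix.SpecialLinearGroup.coe_neg]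
      simp [← Matrix.diagonal_one, ← Matrix.diagonal_neg]
  · rintro (h | h)
    · exact ⟨1, by norm_num, by rw [h]; simp⟩
    · refine ⟨-1, by norm_num, ?_⟩
      rw [h, Matrix.SpecialLinearGroup.coe_neg]
      simp [← Matrix.diagonal_one, ← Matrix.diagonal_neg]

lemma sq_eq_neg_one_of_trace_zero {x : SL2 F}
    (htr : Matrix.trace (x : Matrix (Fin 2) (Fin 2) F) = 0) : x * x = -1 := by
  obtain ⟨a, b, c, d, hg0⟩ : ∃ a b c d, (x : Matrix (Fin 2) (Fin 2) F) = !![a, b; c, d] :=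
    ⟨_, _, _, _, Matrix.eta_fin_two _⟩
  have hd : d = -a := by
    rw [hg0, Matrix.trace_fin_two_of] at htr; linear_combination htr
  have hdet : a * d - b * c = 1 := by
    have := x.2; rw [hg0, Matrix.det_fin_two_of] at this; exact this
  have hg : (x : Matrix (Fin 2) (Fin 2) F) = !![a, b; c, -a] := by rw [hg0, hd]
  rw [hd] at hdet
  apply Subtype.ext
  rw [Matrix.SpecialLinearGroup.coe_mul, Matrix.SpecialLinearGroup.coe_neg,
    Matrix.SpecialLinearGroup.coe_one, hg]
  ext i j
  fin_cases i <;> fin_cases j <;>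
    simp [Matrix.mul_apply, Fin.sum_univ_two] <;>
    first
      | ring1
      | linear_combination hdet | linear_combination -hdet
      | linear_combination 2*hdet | linear_combination -2*hdet

lemma psl_orderOf_eq_two_iff (x : SL2 F) :
    orderOf (QuotientGroup.mk x : PSL(2, F)) = 2 ↔
      Matrix.trace (x : Matrix (Fin 2) (Fin 2) F) = 0 ∧ x ≠ 1 ∧ x ≠ -1 := by
  obtain ⟨a, b, c, d, hg0⟩ : ∃ a b c d, (x : Matrix (Fin 2) (Fin 2) F) = !![a, b; c, d] :=
    ⟨_, _, _, _, Matrix.eta_fin_two _⟩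
  have hdet : a * d - b * c = 1 := by
    have := x.2; rw [hg0, Matrix.det_fin_two_of] at this; exact this
  constructor
  · intro h
    have hne : (QuotientGroup.mk x : PSL(2, F)) ≠ 1 := by
      intro h1; rw [h1, orderOf_one] at h; norm_num at h
    have hxc : ¬(x = 1 ∨ x = -1) := by
      rw [← mem_center_iff']
      intro hmem
      exact hne ((QuotientGroup.eq_one_iff x).mpr hmem)
    have hsq : (QuotientGroup.mk x : PSL(2, F)) ^ 2 = 1 := by
      have := pow_orderOf_eq_one (QuotientGroup.mk x : PSL(2, F))
      rwa [h] at this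
    have hx2 : x * x = 1 ∨ x * x = -1 := by
      rw [← mem_center_iff']
      rw [← QuotientGroup.eq_one_iff]
      rw [← hsq]
      rw [pow_two]
      rfl
    obtain ⟨ε, hε⟩ : ∃ ε : F, (x : Matrix (Fin 2) (Fin 2) F) * x = ε • 1 := by
      rcases hx2 with h' | h'
      · refine ⟨1, ?_⟩
        rw [← Matrix.SpecialLinearGroup.coe_mul, h']
        simp
      · refine ⟨-1, ?_⟩
        rw [← Matrix.SpecialLinearGroup.coe_mul, h']
        rw [Matrix.SpecialLinearGroup.coe_neg]
        simp
    rw [hg0] at hε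
    have e01 : a * b + b * d = 0 := by
      have := congrFun (congrFun hε 0) 1
      simpa [Matrix.mul_apply, Fin.sum_univ_two] using this
    have e10 : c * a + d * c = 0 := by
      have := congrFun (congrFun hε 1) 0
      simpa [Matrix.mul_apply, Fin.sum_univ_two] using this
    have e00 : a * a + b * c = ε := by
      have := congrFun (congrFun hε 0) 0
      simpa [Matrix.mul_apply, Fin.sum_univ_two] using this
    have e11 : c * b + d * d = ε := by
      have := congrFun (congrFun hε 1) 1
      simpa [Matrix.mul_apply, Fin.sum_univ_two] using this
    have htr : a + d = 0 := by
      by_contra ht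
      have hb : b = 0 := by
        have : b * (a + d) = 0 := by linear_combination e01
        rcases mul_eq_zero.mp this with h' | h'
        · exact h'
        · exact absurd h' ht
      have hc : c = 0 := by
        have : c * (a + d) = 0 := by linear_combination e10
        rcases mul_eq_zero.mp this with h' | h'
        · exact h'
        · exact absurd h' ht
      have had : a = d := by
        have : (a - d) * (a + d) = 0 := by linear_combination e00 - e11
        rcases mul_eq_zero.mp this with h' | h'
        · linear_combination h'
        · exact absurd h' ht
      have ha1 : a * a = 1 := by
        linear_combination hdet + a * had + b * hc
      rcases mul_self_eq_one_iff.mp ha1 with h' | h'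
      · apply hxc; left
        apply Subtype.ext
        rw [hg0, hb, hc, ← had, h']
        ext i j
        fin_cases i <;> fin_cases j <;> simp [Matrix.one_apply]
      · apply hxc; right
        apply Subtype.ext
        rw [hg0, hb, hc, ← had, h', Matrix.SpecialLinearGroup.coe_neg,
          Matrix.SpecialLinearGroup.coe_one]
        ext i j
        fin_cases i <;> fin_cases j <;> simp [Matrix.one_apply]
    refine ⟨?_, fun h' => hxc (Or.inl h'), fun h' => hxc (Or.inr h')⟩
    rw [hg0, Matrix.trace_fin_two_of]
    exact htr
  · rintro ⟨htr, h1, hneg⟩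
    have hsq : x * x = -1 := sq_eq_neg_one_of_trace_zero htr
    apply orderOf_eq_prime
    · rw [pow_two, ← QuotientGroup.mk_mul, hsq, QuotientGroup.eq_one_iff]
      exact mem_center_iff'.mpr (Or.inr rfl)
    · intro hcon
      rw [QuotientGroup.eq_one_iff] at hcon
      rcases mem_center_iff'.mp hcon with h' | h'
      · exact h1 h'
      · exact hneg h'

lemma card_ne_zero' : Nat.card {b : F // b ≠ 0} = Fintype.card F - 1 := by
  rw [Nat.card_eq_fintype_card, Fintype.card_subtype_compl, Fintype.card_subtype_eq]

lemma pair_count (e : F) : Nat.card {bc : F × F // bc.1 * bc.2 = e}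
    = (Fintype.card F - 1) + (if e = 0 then Fintype.card F else 0) := by
  by_cases he : e = 0
  · subst he
    have E : {bc : F × F // bc.1 * bc.2 = 0} ≃ ({b : F // b ≠ 0} ⊕ F) :=
      { toFun := fun p => if h : p.1.1 = 0 then Sum.inr p.1.2 else Sum.inl ⟨p.1.1, h⟩
        invFun := Sum.elim (fun b => ⟨(b.1, 0), by simp⟩) (fun c => ⟨(0, c), by simp⟩)
        left_inv := by
          rintro ⟨⟨b, c⟩, hp⟩
          by_cases h : b = 0
          · simp only [h, dif_pos]
            apply Subtype.ext
            simp [h]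
          · simp only [h, dif_neg, not_false_iff]
            apply Subtype.ext
            have hc : c = 0 := by
              rcases mul_eq_zero.mp hp with h' | h'
              · exact absurd h' h
              · exact h'
            simp [hc]
        right_inv := by
          rintro (b | c)
          · simp [b.2]
          · simp }
    rw [Nat.card_congr E, Nat.card_sum, card_ne_zero', Nat.card_eq_fintype_card]
    simp
  · simp only [if_neg he, add_zero]
    have E : {bc : F × F // bc.1 * bc.2 = e} ≃ {b : F // b ≠ 0} :=
      { toFun := fun p => ⟨p.1.1, fun h => he (by rw [← p.2, h, zero_mul])⟩
        invFun := fun b => ⟨(b.1, b.1⁻¹ * e), mul_inv_cancel_left₀ b.2 e⟩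
        left_inv := by
          rintro ⟨⟨b, c⟩, hp⟩
          apply Subtype.ext
          have hb : b ≠ 0 := fun h => he (by rw [← hp, h, zero_mul])
          have : b⁻¹ * e = c := by
            rw [← hp]
            exact inv_mul_cancel_left₀ hb c
          simp [this]
        right_inv := fun b => rfl }
    rw [Nat.card_congr E, card_ne_zero']

lemma card_traceZero :
    Nat.card {x : SL2 F // Matrix.trace (x : Matrix (Fin 2) (Fin 2) F) = 0}
      = Fintype.card F * (Fintype.card F - 1)
        + (Finset.univ.filter (fun a : F => a * a = -1)).card * Fintype.card F := by
  classical
  have E1 : {x : SL2 F // Matrix.trace (x : Matrix (Fin 2) (Fin 2) F) = 0}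
      ≃ {v : F × F × F // v.2.1 * v.2.2 = -1 - v.1 * v.1} :=
    { toFun := fun x => ⟨((x : Matrix (Fin 2) (Fin 2) F) 0 0,
        (x : Matrix (Fin 2) (Fin 2) F) 0 1, (x : Matrix (Fin 2) (Fin 2) F) 1 0), by
          have hdet := x.1.2
          have htr := x.2
          rw [Matrix.det_fin_two] at hdet
          rw [Matrix.trace_fin_two] at htr
          simp only
          linear_combination -hdet + ((x : Matrix (Fin 2) (Fin 2) F) 0 0) * htr⟩
      invFun := fun v => ⟨⟨!![v.1.1, v.1.2.1; v.1.2.2, -v.1.1], by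
          rw [Matrix.det_fin_two_of]
          linear_combination -v.2⟩, by
          show Matrix.trace !![v.1.1, v.1.2.1; v.1.2.2, -v.1.1] = 0
          rw [Matrix.trace_fin_two_of]
          ring⟩
      left_inv := by
          rintro ⟨⟨M, hM⟩, htr⟩
          apply Subtype.ext
          apply Subtype.ext
          rw [Matrix.trace_fin_two] at htr
          have h11 : M 1 1 = -(M 0 0) := by linear_combination htr
          show !![M 0 0, M 0 1; M 1 0, -(M 0 0)] = M
          ext i j
          fin_cases i <;> fin_cases j <;> simp [h11]
      right_inv := by
          rintro ⟨⟨a, b, c⟩, hv⟩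
          rfl }
  have E2 : {v : F × F × F // v.2.1 * v.2.2 = -1 - v.1 * v.1}
      ≃ Σ a : F, {bc : F × F // bc.1 * bc.2 = -1 - a * a} :=
    Equiv.subtypeProdEquivSigmaSubtype (fun (a : F) (bc : F × F) => bc.1 * bc.2 = -1 - a * a)
  rw [Nat.card_congr (E1.trans E2)]
  letI : ∀ a : F, Fintype {bc : F × F // bc.1 * bc.2 = -1 - a * a} := fun a =>
    Subtype.fintype _
  rw [Nat.card_eq_fintype_card, Fintype.card_sigma]
  have step : ∀ a : F, Fintype.card {bc : F × F // bc.1 * bc.2 = -1 - a * a}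
      = (Fintype.card F - 1) + (if a * a = -1 then Fintype.card F else 0) := by
    intro a
    rw [← Nat.card_eq_fintype_card, pair_count]
    congr 1
    by_cases h : a * a = -1
    · rw [if_pos h, if_pos (by linear_combination -h)]
    · rw [if_neg h, if_neg (fun hh => h (by linear_combination -hh))]
  rw [Finset.sum_congr rfl (fun a _ => step a)]
  rw [Finset.sum_add_distrib, Finset.sum_const, ← Finset.sum_filter, Finset.sum_const]
  simp [mul_comm, Finset.card_univ]

-- count of square roots of -1
lemma roots_neg_one_char_two (h2 : (-1 : F) = 1) :
    (Finset.univ.filter (fun a : F => a * a = -1)).card = 1 := by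
  have : Finset.univ.filter (fun a : F => a * a = -1) = {1} := by
    apply Finset.ext
    intro a
    simp only [Finset.mem_filter, Finset.mem_univ, true_and, Finset.mem_singleton]
    constructor
    · intro ha
      rcases mul_self_eq_one_iff.mp (by rw [ha, h2]) with h | h
      · exact h
      · rw [h]; linear_combination h2
    · intro ha
      rw [ha, mul_one, h2]
  rw [this, Finset.card_singleton]

lemma roots_neg_one_one_mod_four (h1 : Fintype.card F % 4 = 1) :
    (Finset.univ.filter (fun a : F => a * a = -1)).card = 2 := by
  obtain ⟨i, hi⟩ : IsSquare (-1 : F) :=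
    FiniteField.isSquare_neg_one_iff.mpr (by omega)
  have hchar : ringChar F ≠ 2 := by
    intro hc
    have := (FiniteField.even_card_iff_char_two (F := F)).mp hc
    omega
  have h2 : (2 : F) ≠ 0 := Ring.two_ne_zero hchar
  have hi0 : i ≠ 0 := by
    intro h
    rw [h, mul_zero] at hi
    exact one_ne_zero (α := F) (by linear_combination -hi)
  have hne : i ≠ -i := by
    intro h
    have : (2 : F) * i = 0 := by linear_combination h
    rcases mul_eq_zero.mp this with h' | h'
    · exact h2 h'
    · exact hi0 h'
  have : Finset.univ.filter (fun a : F => a * a = -1) = {i, -i} := by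
    apply Finset.ext
    intro a
    simp only [Finset.mem_filter, Finset.mem_univ, true_and, Finset.mem_insert,
      Finset.mem_singleton]
    constructor
    · intro ha
      have : (a - i) * (a + i) = 0 := by linear_combination ha + hi
      rcases mul_eq_zero.mp this with h' | h'
      · left; linear_combination h'
      · right; linear_combination h'
    · rintro (h | h) <;> rw [h] <;> linear_combination -hi
  rw [this, Finset.card_insert_of_notMem (by simpa using hne), Finset.card_singleton]

lemma roots_neg_one_three_mod_four (h3 : Fintype.card F % 4 = 3) :
    (Finset.univ.filter (fun a : F => a * a = -1)).card = 0 := by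
  rw [Finset.card_eq_zero]
  apply Finset.eq_empty_of_forall_notMem
  intro a ha
  simp only [Finset.mem_filter, Finset.mem_univ, true_and] at ha
  have : IsSquare (-1 : F) := ⟨a, ha.symm⟩
  rw [FiniteField.isSquare_neg_one_iff] at this
  exact this h3

lemma neg_one_eq_one_iff_SL : ((-1 : SL2 F) = 1) ↔ ((-1 : F) = 1) := by
  constructor
  · intro h
    have := congrArg (fun m : SL2 F => (m : Matrix (Fin 2) (Fin 2) F) 0 0) h
    simpa [Matrix.SpecialLinearGroup.coe_neg] using this
  · intro h
    apply Subtype.ext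
    rw [Matrix.SpecialLinearGroup.coe_neg, Matrix.SpecialLinearGroup.coe_one]
    ext i j
    by_cases hij : i = j
    · subst hij; simp [Matrix.one_apply, h]
    · simp [Matrix.one_apply, hij]

lemma card_center' : Nat.card (Subgroup.center (SL2 F)) = if (-1 : F) = 1 then 1 else 2 := by
  have hset : (Subgroup.center (SL2 F) : Set (SL2 F)) = {1, -1} := by
    ext x
    simp only [SetLike.mem_coe, Set.mem_insert_iff, Set.mem_singleton_iff]
    exact mem_center_iff'
  have hcard : Nat.card (Subgroup.center (SL2 F)) = Nat.card ({1, -1} : Set (SL2 F)) :=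
    Nat.card_congr (Equiv.setCongr hset)
  rw [hcard, Nat.card_coe_set_eq]
  by_cases h : (-1 : F) = 1
  · rw [if_pos h]
    have : (-1 : SL2 F) = 1 := neg_one_eq_one_iff_SL.mpr h
    rw [this]
    simp
  · rw [if_neg h]
    apply Set.ncard_pair
    intro hh
    exact h (neg_one_eq_one_iff_SL.mp hh.symm)

lemma card_orderTwo_mul :
    Nat.card (Subgroup.center (SL2 F)) * Nat.card {g : PSL(2, F) // orderOf g = 2}
      = Nat.card {x : SL2 F //
          Matrix.trace (x : Matrix (Fin 2) (Fin 2) F) = 0 ∧ x ≠ 1 ∧ x ≠ -1} := by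
  have key := Nat.card_congr
    (QuotientGroup.preimageMkEquivSubgroupProdSet (Subgroup.center (SL2 F))
      {g : PSL(2, F) | orderOf g = 2})
  rw [Nat.card_prod] at key
  have hpre : ((QuotientGroup.mk : (SL2 F) → PSL(2, F)) ⁻¹' {g : PSL(2, F) | orderOf g = 2})
      = {x : SL2 F | Matrix.trace (x : Matrix (Fin 2) (Fin 2) F) = 0 ∧ x ≠ 1 ∧ x ≠ -1} := by
    ext x
    exact psl_orderOf_eq_two_iff x
  rw [hpre] at key
  exact key.symm

lemma trace_one_SL :
    Matrix.trace ((1 : SL2 F) : Matrix (Fin 2) (Fin 2) F) = 2 := by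
  rw [Matrix.SpecialLinearGroup.coe_one, Matrix.trace_one]
  norm_num

lemma trace_neg_one_SL :
    Matrix.trace ((-1 : SL2 F) : Matrix (Fin 2) (Fin 2) F) = -2 := by
  rw [Matrix.SpecialLinearGroup.coe_neg, Matrix.SpecialLinearGroup.coe_one, Matrix.trace_neg,
    Matrix.trace_one]
  norm_num

lemma natCard_subtype {α : Type*} (P : α → Prop) :
    Nat.card {x // P x} = ({x | P x} : Set α).ncard := by
  rw [← Nat.card_coe_set_eq]
  rfl

end helpers

/-- In `X = PSL(2, q)` with `q = p ^ f ≥ 4`, all involutions are conjugate, and their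
number is `q² - 1` if `p = 2`, `q(q+1)/2` if `q ≡ 1 (mod 4)`, and `q(q-1)/2` if
`q ≡ 3 (mod 4)`. -/
theorem stmt6 (p f q : ℕ) [Fact p.Prime] (hq : q = p ^ f) (hq4 : 4 ≤ q) :
    (∀ g h : PSL(2, GaloisField p f), orderOf g = 2 → orderOf h = 2 → IsConj g h) ∧
    (p = 2 →
      Nat.card {g : PSL(2, GaloisField p f) // orderOf g = 2} = q ^ 2 - 1) ∧
    (q % 4 = 1 →
      2 * Nat.card {g : PSL(2, GaloisField p f) // orderOf g = 2} = q * (q + 1)) ∧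
    (q % 4 = 3 →
      2 * Nat.card {g : PSL(2, GaloisField p f) // orderOf g = 2} = q * (q - 1)) := by
  letI : Fintype (GaloisField p f) := Fintype.ofFinite _
  letI : DecidableEq (GaloisField p f) := Classical.decEq _
  set F := GaloisField p f with hF
  have hf : f ≠ 0 := by
    rintro rfl
    rw [pow_zero] at hq
    omega
  have hcard : Fintype.card F = q := by
    rw [← Nat.card_eq_fintype_card, GaloisField.card p f hf, hq]
  have hq1 : 1 ≤ q := by omega
  obtain ⟨m, hm⟩ : ∃ m, q = m + 1 := ⟨q - 1, by omega⟩
  constructor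
  · -- conjugacy
    intro g h hg hh
    obtain ⟨x, rfl⟩ := QuotientGroup.mk'_surjective _ g
    obtain ⟨y, rfl⟩ := QuotientGroup.mk'_surjective _ h
    obtain ⟨htrx, hx1, _⟩ := (psl_orderOf_eq_two_iff x).mp hg
    obtain ⟨htry, hy1, _⟩ := (psl_orderOf_eq_two_iff y).mp hh
    obtain ⟨t, ht⟩ := isConj_iff.mp ((isConj_JSL x htrx hx1).symm.trans (isConj_JSL y htry hy1))
    refine isConj_iff.mpr ⟨QuotientGroup.mk' _ t, ?_⟩
    rw [← ht]
    simp
  have key := card_orderTwo_mul (F := F)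
  refine ⟨?_, ?_, ?_⟩
  · -- characteristic two
    intro hp2
    haveI : CharP F 2 := by rw [← hp2]; infer_instance
    have hneg : (-1 : F) = 1 := by
      have h20 : (2 : F) = 0 := CharTwo.two_eq_zero
      linear_combination -h20
    have hcen : Nat.card (Subgroup.center (Matrix.SpecialLinearGroup (Fin 2) F)) = 1 := by
      rw [card_center', if_pos hneg]
    rw [hcen, one_mul] at key
    have hnegSL : (-1 : Matrix.SpecialLinearGroup (Fin 2) F) = 1 := neg_one_eq_one_iff_SL.mpr hneg
    have hTcard : Nat.card {x : Matrix.SpecialLinearGroup (Fin 2) F //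
          Matrix.trace (x : Matrix (Fin 2) (Fin 2) F) = 0 ∧ x ≠ 1 ∧ x ≠ -1}
        = Nat.card {x : Matrix.SpecialLinearGroup (Fin 2) F //
            Matrix.trace (x : Matrix (Fin 2) (Fin 2) F) = 0 ∧ x ≠ 1} :=
      Nat.card_congr (Equiv.subtypeEquivRight fun x => by rw [hnegSL]; tauto)
    have h1tr : Matrix.trace ((1 : Matrix.SpecialLinearGroup (Fin 2) F)
        : Matrix (Fin 2) (Fin 2) F) = 0 := by
      rw [trace_one_SL]; exact CharTwo.two_eq_zero
    have hins : {x : Matrix.SpecialLinearGroup (Fin 2) F |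
          Matrix.trace (x : Matrix (Fin 2) (Fin 2) F) = 0}
        = insert 1 {x : Matrix.SpecialLinearGroup (Fin 2) F |
            Matrix.trace (x : Matrix (Fin 2) (Fin 2) F) = 0 ∧ x ≠ 1} := by
      ext x
      simp only [Set.mem_setOf_eq, Set.mem_insert_iff]
      by_cases hx : x = 1
      · subst hx
        exact iff_of_true h1tr (Or.inl rfl)
      · tauto
    have hM : Nat.card {x : Matrix.SpecialLinearGroup (Fin 2) F //
        Matrix.trace (x : Matrix (Fin 2) (Fin 2) F) = 0} = q * (q - 1) + 1 * q := by
      rw [card_traceZero, roots_neg_one_char_two hneg, hcard]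
    have hsplit : Nat.card {x : Matrix.SpecialLinearGroup (Fin 2) F //
          Matrix.trace (x : Matrix (Fin 2) (Fin 2) F) = 0}
        = Nat.card {x : Matrix.SpecialLinearGroup (Fin 2) F //
            Matrix.trace (x : Matrix (Fin 2) (Fin 2) F) = 0 ∧ x ≠ 1} + 1 := by
      rw [natCard_subtype, natCard_subtype, hins,
        Set.ncard_insert_of_notMem (fun hmem => hmem.2 rfl) (Set.toFinite _)]
    rw [key, hTcard]
    have := hsplit.symm.trans hM
    subst hm
    have hsq : (m + 1) ^ 2 = (m + 1) * (m + 1) := by ring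
    have hexp : (m + 1) * (m + 1 - 1) + 1 * (m + 1) = (m + 1) * (m + 1) := by
      simp only [Nat.add_sub_cancel]
      ring
    omega
  · -- q ≡ 1 mod 4
    intro hq14
    have hchar : ringChar F ≠ 2 := by
      intro hc
      have := (FiniteField.even_card_iff_char_two (F := F)).mp hc
      rw [hcard] at this
      omega
    have h2ne : (2 : F) ≠ 0 := Ring.two_ne_zero hchar
    have hneg : (-1 : F) ≠ 1 := fun h => h2ne (by linear_combination -h)
    have hcen : Nat.card (Subgroup.center (Matrix.SpecialLinearGroup (Fin 2) F)) = 2 := by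
      rw [card_center', if_neg hneg]
    rw [hcen] at key
    have hTcard : Nat.card {x : Matrix.SpecialLinearGroup (Fin 2) F //
          Matrix.trace (x : Matrix (Fin 2) (Fin 2) F) = 0 ∧ x ≠ 1 ∧ x ≠ -1}
        = Nat.card {x : Matrix.SpecialLinearGroup (Fin 2) F //
            Matrix.trace (x : Matrix (Fin 2) (Fin 2) F) = 0} := by
      apply Nat.card_congr
      apply Equiv.subtypeEquivRight
      intro x
      constructor
      · exact fun hx => hx.1
      · intro hx
        refine ⟨hx, ?_, ?_⟩
        · rintro rfl
          rw [trace_one_SL] at hx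
          exact h2ne hx
        · rintro rfl
          rw [trace_neg_one_SL] at hx
          exact h2ne (by linear_combination -hx)
    have hM : Nat.card {x : Matrix.SpecialLinearGroup (Fin 2) F //
        Matrix.trace (x : Matrix (Fin 2) (Fin 2) F) = 0} = q * (q - 1) + 2 * q := by
      rw [card_traceZero, roots_neg_one_one_mod_four (by rw [hcard]; exact hq14), hcard]
    rw [key, hTcard, hM]
    subst hm
    simp only [Nat.add_sub_cancel]
    ring
  · -- q ≡ 3 mod 4
    intro hq34
    have hchar : ringChar F ≠ 2 := by
      intro hc
      have := (FiniteField.even_card_iff_char_two (F := F)).mp hc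
      rw [hcard] at this
      omega
    have h2ne : (2 : F) ≠ 0 := Ring.two_ne_zero hchar
    have hneg : (-1 : F) ≠ 1 := fun h => h2ne (by linear_combination -h)
    have hcen : Nat.card (Subgroup.center (Matrix.SpecialLinearGroup (Fin 2) F)) = 2 := by
      rw [card_center', if_neg hneg]
    rw [hcen] at key
    have hTcard : Nat.card {x : Matrix.SpecialLinearGroup (Fin 2) F //
          Matrix.trace (x : Matrix (Fin 2) (Fin 2) F) = 0 ∧ x ≠ 1 ∧ x ≠ -1}
        = Nat.card {x : Matrix.SpecialLinearGroup (Fin 2) F //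
            Matrix.trace (x : Matrix (Fin 2) (Fin 2) F) = 0} := by
      apply Nat.card_congr
      apply Equiv.subtypeEquivRight
      intro x
      constructor
      · exact fun hx => hx.1
      · intro hx
        refine ⟨hx, ?_, ?_⟩
        · rintro rfl
          rw [trace_one_SL] at hx
          exact h2ne hx
        · rintro rfl
          rw [trace_neg_one_SL] at hx
          exact h2ne (by linear_combination -hx)
    have hM : Nat.card {x : Matrix.SpecialLinearGroup (Fin 2) F //
        Matrix.trace (x : Matrix (Fin 2) (Fin 2) F) = 0} = q * (q - 1) + 0 * q := by
      rw [card_traceZero, roots_neg_one_three_mod_four (by rw [hcard]; exact hq34), hcard]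
    rw [key, hTcard, hM]
    omega
end

section
/- Let q = 2^f with f ≥ 2, let X = PSL(2,q) (= SL(2,q) since the center is trivial), and let g ∈ X be an element of order 2. Then the centralizer C_X(g) is an elementary abelian 2-group of order q, i.e., |C_X(g)| = q and every element x of C_X(g) satisfies x² = 1. -/
open Matrix
open scoped MatrixGroups


lemma sq_inj_char2 {F : Type*} [Field F] [CharP F 2] {x y : F} (h : x ^ 2 = y ^ 2) : x = y := by
  have h1 : (x + y) ^ 2 = 0 := by
    rw [CharTwo.add_sq, h, ← CharTwo.add_sq]; simp [CharTwo.add_self_eq_zero]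
  have h2 : x + y = 0 := pow_eq_zero_iff (n := 2) (by norm_num) |>.mp h1
  rw [eq_neg_of_add_eq_zero_left h2, CharTwo.neg_eq]

lemma sl2_entries {F : Type*} [Field F] [CharP F 2]
    (A : SpecialLinearGroup (Fin 2) F) (h2 : A ^ 2 = 1) (h1 : A ≠ 1) :
    A.1 1 1 = A.1 0 0 ∧ A.1 0 0 * A.1 0 0 + A.1 0 1 * A.1 1 0 = 1 ∧
      (A.1 0 1 ≠ 0 ∨ A.1 1 0 ≠ 0) := by
  have hc2 : (2 : F) = 0 := CharTwo.two_eq_zero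
  obtain ⟨M, hdet⟩ := A
  rw [Matrix.det_fin_two] at hdet
  set a := M 0 0; set b := M 0 1; set c := M 1 0; set d := M 1 1
  have hsq : M * M = 1 := by
    have := congrArg Subtype.val ((pow_two (M := SpecialLinearGroup (Fin 2) F) _).symm.trans h2)
    exact this
  have e00 : a * a + b * c = 1 := by
    have := congrFun (congrFun hsq 0) 0
    simpa [Matrix.mul_apply, Fin.sum_univ_two, Matrix.one_apply] using this
  have e01 : a * b + b * d = 0 := by
    have := congrFun (congrFun hsq 0) 1
    simpa [Matrix.mul_apply, Fin.sum_univ_two, Matrix.one_apply, mul_comm] using this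
  have e10 : c * a + d * c = 0 := by
    have := congrFun (congrFun hsq 1) 0
    simpa [Matrix.mul_apply, Fin.sum_univ_two, Matrix.one_apply, mul_comm] using this
  have e11 : c * b + d * d = 1 := by
    have := congrFun (congrFun hsq 1) 1
    simpa [Matrix.mul_apply, Fin.sum_univ_two, Matrix.one_apply] using this
  have hbc : ¬ (b = 0 ∧ c = 0) := by
    rintro ⟨hb, hc⟩
    apply h1
    have ha : a = 1 := sq_inj_char2 (x := a) (y := 1)
      (by rw [pow_two, pow_two]; simpa [hb, hc] using e00)
    have hd : d = 1 := sq_inj_char2 (x := d) (y := 1)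
      (by rw [pow_two, pow_two]; simpa [hb, hc] using e11)
    ext i j
    fin_cases i <;> fin_cases j <;> simp [Matrix.one_apply] <;> assumption
  have had : d = a := by
    by_cases hb : b = 0
    · have hc : c ≠ 0 := fun hc => hbc ⟨hb, hc⟩
      have : c * (a + d) = 0 := by linear_combination e10
      rcases mul_eq_zero.mp this with h | h
      · exact absurd h hc
      · linear_combination h - a * hc2
    · have : b * (a + d) = 0 := by linear_combination e01
      rcases mul_eq_zero.mp this with h | h
      · exact absurd h hb
      · linear_combination h - a * hc2
  refine ⟨had, e00, ?_⟩
  by_contra hh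
  push_neg at hh
  exact hbc ⟨hh.1, hh.2⟩

/-- Facts used for commuting elements -/
lemma sl2_comm_entries {F : Type*} [Field F] [CharP F 2]
    (A B : SpecialLinearGroup (Fin 2) F) (h2 : A ^ 2 = 1) (h1 : A ≠ 1)
    (hB : B * A = A * B) :
    B.1 1 1 = B.1 0 0 ∧ B.1 0 1 * A.1 1 0 = A.1 0 1 * B.1 1 0 := by
  obtain ⟨had, haa, hbc⟩ := sl2_entries A h2 h1
  set a := A.1 0 0; set b := A.1 0 1; set c := A.1 1 0
  set x := B.1 0 0; set y := B.1 0 1; set z := B.1 1 0; set w := B.1 1 1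
  have hm : B.1 * A.1 = A.1 * B.1 := by
    have := congrArg Subtype.val hB
    simpa using this
  have e00 : x * a + y * c = a * x + b * z := by
    have := congrFun (congrFun hm 0) 0
    simpa [Matrix.mul_apply, Fin.sum_univ_two] using this
  have e01 : x * b + y * (A.1 1 1) = a * y + b * w := by
    have := congrFun (congrFun hm 0) 1
    simpa [Matrix.mul_apply, Fin.sum_univ_two] using this
  have e10 : z * a + w * c = c * x + (A.1 1 1) * z := by
    have := congrFun (congrFun hm 1) 0
    simpa [Matrix.mul_apply, Fin.sum_univ_two] using this
  rw [had] at e01 e10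
  have hyc : y * c = b * z := by linear_combination e00
  have hxb : x * b = b * w := by linear_combination e01
  have hwc : w * c = c * x := by linear_combination e10
  constructor
  · rcases hbc with hb | hc
    · have := mul_left_cancel₀ hb (by linear_combination hxb : b * x = b * w)
      exact this.symm
    · exact mul_left_cancel₀ hc (by linear_combination hwc : c * w = c * x)
  · linear_combination hyc

section aux
variable {F : Type*} [Field F] [CharP F 2]

lemma sl2_sq_one (A B : SpecialLinearGroup (Fin 2) F) (h2 : A ^ 2 = 1) (h1 : A ≠ 1)
    (hB : B * A = A * B) : B ^ 2 = 1 := by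
  have hc2 : (2 : F) = 0 := CharTwo.two_eq_zero
  obtain ⟨hw, -⟩ := sl2_comm_entries A B h2 h1 hB
  set x := B.1 0 0; set y := B.1 0 1; set z := B.1 1 0; set w := B.1 1 1
  have hdetB : x * w - y * z = 1 := by rw [← Matrix.det_fin_two]; exact B.2
  apply Subtype.ext
  have : (B.1 * B.1 : Matrix (Fin 2) (Fin 2) F) = 1 := by
    ext i j
    fin_cases i <;> fin_cases j <;>
      simp [Matrix.mul_apply, Fin.sum_univ_two, Matrix.one_apply]
    · linear_combination hdetB - x*hw + y*z*hc2
    · linear_combination y*hw + x*y*hc2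
    · linear_combination z*hw + x*z*hc2
    · linear_combination hdetB + w*hw + y*z*hc2
  simpa [pow_two] using this

lemma sl2_cent_card (A : SpecialLinearGroup (Fin 2) F) (h2 : A ^ 2 = 1) (h1 : A ≠ 1) :
    Nat.card (Subgroup.centralizer ({A} : Set (SpecialLinearGroup (Fin 2) F))) = Nat.card F := by
  have hc2 : (2 : F) = 0 := CharTwo.two_eq_zero
  obtain ⟨had, haa, hbc⟩ := sl2_entries A h2 h1
  set a := A.1 0 0 with ha_def; set b := A.1 0 1 with hb_def; set c := A.1 1 0 with hc_def
  have hdetψ : ∀ t : F, Matrix.det !![1 + t*(a+1), t*b; t*c, 1 + t*(a+1)] = 1 := by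
    intro t
    rw [Matrix.det_fin_two_of]
    linear_combination (-(t^2))*haa + (t*a + t + t^2*a^2 + t^2*a)*hc2
  set ψ : F → SpecialLinearGroup (Fin 2) F := fun t => ⟨_, hdetψ t⟩ with hψ
  have hψmem : ∀ t, ψ t ∈ Subgroup.centralizer ({A} : Set _) := by
    intro t
    rw [Subgroup.mem_centralizer_singleton_iff]
    apply Subtype.ext
    show (ψ t).1 * A.1 = A.1 * (ψ t).1
    ext i j
    fin_cases i <;> fin_cases j <;>
      simp [hψ, Matrix.mul_apply, Fin.sum_univ_two]
    · ring
    · linear_combination (t*b)*had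
    · linear_combination (-(t*c))*had
    · ring
  refine (Nat.card_eq_of_bijective (fun t => ⟨ψ t, hψmem t⟩) ⟨?_, ?_⟩).symm
  · intro t s hts
    have hts' := congrArg (fun B => (Subtype.val (Subtype.val B) : Matrix (Fin 2) (Fin 2) F)) hts
    rcases hbc with hb | hc
    · have := congrFun (congrFun hts' 0) 1
      simp only [hψ] at this
      have : t * b = s * b := by simpa using this
      exact mul_right_cancel₀ hb this
    · have := congrFun (congrFun hts' 1) 0
      simp only [hψ] at this
      have : t * c = s * c := by simpa using this
      exact mul_right_cancel₀ hc this
  · rintro ⟨B, hB⟩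
    rw [Subgroup.mem_centralizer_singleton_iff] at hB
    obtain ⟨hw, hyc⟩ := sl2_comm_entries A B h2 h1 hB
    set x := B.1 0 0; set y := B.1 0 1; set z := B.1 1 0; set w := B.1 1 1
    have hdetB : x * w - y * z = 1 := by rw [← Matrix.det_fin_two]; exact B.2
    by_cases hb : b ≠ 0
    · refine ⟨y / b, ?_⟩
      have key : (x*b)^2 = (b + y*(a+1))^2 := by
        linear_combination b^2*hdetB - x*b^2*hw + y*b*hyc - y^2*haa +
          (y^2*c*b - b*y*a - b*y - y^2*a - y^2 + b^2*y*z - b*y^2*c)*hc2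
      have hx : x * b = b + y * (a+1) := sq_inj_char2 key
      apply Subtype.ext
      apply Subtype.ext
      show (ψ (y/b)).1 = B.1
      ext i j
      fin_cases i <;> fin_cases j <;> simp [hψ]
      · field_simp
        linear_combination -hx
      · exact div_mul_cancel₀ y hb
      · field_simp
        linear_combination hyc
      · rw [show (B.1 1 1 : F) = B.1 0 0 from hw]; field_simp
        linear_combination -hx
    · push_neg at hb
      have hc : c ≠ 0 := by rcases hbc with h | h; exact absurd hb h; exact h
      have hy : y = 0 := by
        rcases mul_eq_zero.mp
          (by rw [hyc, show (A.1 0 1 : F) = 0 from hb, zero_mul] : y * c = 0) with h | h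
        · exact h
        · exact absurd h hc
      have ha1 : a = 1 := sq_inj_char2 (x := a) (y := 1)
        (by rw [pow_two, pow_two, one_mul]; linear_combination haa - c*hb)
      have hx1 : x = 1 := sq_inj_char2 (x := x) (y := 1)
        (by rw [pow_two, pow_two, one_mul]; linear_combination hdetB - x*hw + z*hy)
      refine ⟨z / c, ?_⟩
      apply Subtype.ext
      apply Subtype.ext
      show (ψ (z/c)).1 = B.1
      ext i j
      fin_cases i <;> fin_cases j <;> simp [hψ]
      · rw [show (B.1 0 0 : F) = 1 from hx1, ha1]; field_simp
        linear_combination z*hc2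
      · rw [show (B.1 0 1 : F) = 0 from hy, hb, mul_zero]
      · exact div_mul_cancel₀ z hc
      · rw [show (B.1 1 1 : F) = B.1 0 0 from hw, show (B.1 0 0 : F) = 1 from hx1, ha1]
        field_simp
        linear_combination z*hc2

end aux

lemma sl2_center_eq_bot {F : Type*} [Field F] [CharP F 2] :
    Subgroup.center (SpecialLinearGroup (Fin 2) F) = ⊥ := by
  rw [eq_bot_iff]
  intro A hA
  obtain ⟨r, hr1, hr2⟩ := Matrix.SpecialLinearGroup.mem_center_iff.mp hA
  rw [Fintype.card_fin] at hr1
  have hr : r = 1 := sq_inj_char2 (by rw [hr1, one_pow])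
  rw [Subgroup.mem_bot]
  apply Subtype.ext
  rw [← hr2, hr]
  simp

noncomputable def pslEquiv {F : Type*} [Field F] [CharP F 2] :
    PSL(2, F) ≃* Matrix.SpecialLinearGroup (Fin 2) F :=
  (QuotientGroup.quotientMulEquivOfEq sl2_center_eq_bot).trans QuotientGroup.quotientBot

/-- In `X = PSL(2, q)` with `q = 2 ^ f`, `f ≥ 2`, the centralizer of an involution is an
elementary abelian `2`-group of order `q`: it has cardinality `q` and every element
squares to the identity. -/
theorem stmt8 (f : ℕ) (hf : 2 ≤ f)
    (g : PSL(2, GaloisField 2 f)) (hg : orderOf g = 2) :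
    Nat.card (Subgroup.centralizer {g}) = 2 ^ f ∧
    ∀ x ∈ Subgroup.centralizer {g}, x ^ 2 = 1 := by
  set F := GaloisField 2 f with hF
  let e : PSL(2, F) ≃* Matrix.SpecialLinearGroup (Fin 2) F := pslEquiv
  have hA : orderOf (e g) = 2 :=
    (orderOf_injective e.toMonoidHom e.injective g).trans hg
  have hA2 : (e g) ^ 2 = 1 := by
    have h' := pow_orderOf_eq_one (e g)
    rwa [hA] at h'
  have hA1 : e g ≠ 1 := by
    intro h
    rw [h, orderOf_one] at hA
    norm_num at hA
  have hmem : ∀ x : PSL(2, F),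
      x ∈ Subgroup.centralizer {g} ↔ e x ∈ Subgroup.centralizer {e g} := by
    intro x
    simp only [Subgroup.mem_centralizer_singleton_iff]
    constructor
    · intro h; rw [← _root_.map_mul, ← _root_.map_mul, h]
    · intro h; apply e.injective; rw [_root_.map_mul, _root_.map_mul, h]
  constructor
  · have hcard : Nat.card (Subgroup.centralizer ({g} : Set PSL(2, F))) =
        Nat.card (Subgroup.centralizer ({e g} : Set (Matrix.SpecialLinearGroup (Fin 2) F))) :=
      Nat.card_congr (e.toEquiv.subtypeEquiv hmem)
    rw [hcard, sl2_cent_card _ hA2 hA1]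
    exact GaloisField.card 2 f (by omega)
  · intro x hx
    have hc : e x * e g = e g * e x :=
      Subgroup.mem_centralizer_singleton_iff.mp ((hmem x).mp hx)
    have := sl2_sq_one (e g) (e x) hA2 hA1 hc
    apply e.injective
    rw [map_pow, _root_.map_one]
    exact this
end

section
/- Let S be a finite thick generalized quadrangle of order (s,t) with s,t ≥ 2, and let G be a finite group acting on S by automorphisms, transitively on the points and transitively on the lines. Fix a point α and a line ℓ of S, with stabilizers G_α and G_ℓ. Then |G_α|⁴ < |G_ℓ|³ · |G| and |G_ℓ|⁴ < |G_α|³ · |G|. -/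
namespace GQAux

open Finset

variable {P L : Type*} {inc : P → L → Prop} {s t : ℕ}

/-- collinearity -/
def Coll (inc : P → L → Prop) (a b : P) : Prop := ∃ m, inc a m ∧ inc b m

theorem Coll.symm {a b : P} (h : Coll inc a b) : Coll inc b a := by
  obtain ⟨m, h1, h2⟩ := h; exact ⟨m, h2, h1⟩

section Counting

open scoped Classical

variable [Fintype P] [Fintype L]

noncomputable def pts (inc : P → L → Prop) [Fintype P] (m : L) : Finset P :=
  univ.filter (fun x => inc x m)

noncomputable def lns (inc : P → L → Prop) [Fintype L] (x : P) : Finset L :=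
  univ.filter (fun m => inc x m)

theorem mem_pts {x : P} {m : L} : x ∈ pts inc m ↔ inc x m := by simp [pts]
theorem mem_lns {x : P} {m : L} : m ∈ lns inc x ↔ inc x m := by simp [lns]

theorem card_pts (hGQ : IsGenQuadrangle inc s t) (m : L) : (pts inc m).card = s + 1 := by
  have h := hGQ.pts_per_line m
  rw [Nat.card_eq_fintype_card, Fintype.card_subtype] at h
  simpa [pts] using h

theorem card_lns (hGQ : IsGenQuadrangle inc s t) (x : P) : (lns inc x).card = t + 1 := by
  have h := hGQ.lines_per_pt x
  rw [Nat.card_eq_fintype_card, Fintype.card_subtype] at h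
  simpa [lns] using h

theorem coll_self (hGQ : IsGenQuadrangle inc s t) (x : P) : Coll inc x x := by
  have h := card_lns hGQ x
  have : (lns inc x).Nonempty := by rw [← card_pos, h]; omega
  obtain ⟨m, hm⟩ := this
  exact ⟨m, mem_lns.1 hm, mem_lns.1 hm⟩

/-- counting the points other than `y` on a set of lines through `y` -/
theorem card_pencil (hGQ : IsGenQuadrangle inc s t) (y : P) (K : Finset L)
    (hK : ∀ m ∈ K, inc y m) :
    (K.biUnion fun m => (pts inc m).erase y).card = K.card * s := by
  rw [card_biUnion]
  · calc ∑ m ∈ K, ((pts inc m).erase y).card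
        = ∑ _m ∈ K, s := sum_congr rfl fun m hm => by
          rw [card_erase_of_mem (mem_pts.2 (hK m hm)), card_pts hGQ]; omega
      _ = K.card * s := by rw [sum_const, smul_eq_mul]
  · intro m hm n hn hmn
    simp only [disjoint_left]
    intro z hzm hzn
    rw [mem_erase, mem_pts] at hzm hzn
    exact hmn (hGQ.unique_line hzm.1 hzm.2 (hK m hm) hzn.2 (hK n hn))

/-- on a line `m` not through `b` there is exactly one point collinear with `b` -/
theorem exists_unique_proj_pt (hGQ : IsGenQuadrangle inc s t) {b : P} {m : L}
    (hb : ¬ inc b m) : ∃! u : P, inc u m ∧ Coll inc u b := by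
  obtain ⟨q, ⟨hq1, hq2, hq3⟩, hq⟩ := hGQ.proj hb
  refine ⟨q.1, ⟨hq3, q.2, hq2, hq1⟩, ?_⟩
  rintro u ⟨hum, n, hun, hbn⟩
  have := hq (u, n) ⟨hbn, hun, hum⟩
  exact congrArg Prod.fst this

/-- the perp of two noncollinear points is a coclique -/
theorem perp_coclique (hGQ : IsGenQuadrangle inc s t) {a b : P} (hab : ¬ Coll inc a b)
    {u v : P} (hu : Coll inc u a ∧ Coll inc u b) (hv : Coll inc v a ∧ Coll inc v b)
    (huv : u ≠ v) : ¬ Coll inc u v := by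
  rintro ⟨n, hun, hvn⟩
  by_cases han : inc a n
  · have hbn : ¬ inc b n := fun hbn => hab ⟨n, han, hbn⟩
    obtain ⟨w, -, hwu⟩ := exists_unique_proj_pt hGQ hbn
    exact huv ((hwu u ⟨hun, hu.2⟩).trans (hwu v ⟨hvn, hv.2⟩).symm)
  · obtain ⟨w, -, hwu⟩ := exists_unique_proj_pt hGQ han
    exact huv ((hwu u ⟨hun, hu.1⟩).trans (hwu v ⟨hvn, hv.1⟩).symm)

/-- the perp of two noncollinear points has `t+1` elements -/
theorem card_perp (hGQ : IsGenQuadrangle inc s t) {a b : P} (hab : ¬ Coll inc a b) :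
    (univ.filter fun u => Coll inc u a ∧ Coll inc u b).card = t + 1 := by
  set F := univ.filter fun u => Coll inc u a ∧ Coll inc u b with hF
  have hna : ∀ u ∈ F, u ≠ a := by
    rintro u hu rfl
    exact hab (mem_filter.1 hu).2.2
  have hcover : F = (lns inc a).biUnion fun m => F.filter (fun u => inc u m) := by
    ext u
    simp only [mem_biUnion, mem_filter]
    constructor
    · rintro hu
      obtain ⟨m, hum, ham⟩ := (mem_filter.1 hu).2.1
      exact ⟨m, mem_lns.2 ham, hu, hum⟩
    · rintro ⟨m, -, hu, -⟩; exact hu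
  rw [hcover, card_biUnion]
  · have h1 : ∀ m ∈ lns inc a, (F.filter fun u => inc u m).card = 1 := by
      intro m hm
      rw [mem_lns] at hm
      have hbm : ¬ inc b m := fun hbm => hab ⟨m, hm, hbm⟩
      obtain ⟨w, ⟨hwm, hwb⟩, hwu⟩ := exists_unique_proj_pt hGQ hbm
      rw [card_eq_one]
      refine ⟨w, ?_⟩
      ext u
      simp only [mem_filter, mem_singleton]
      constructor
      · rintro ⟨hu, hum⟩
        exact hwu u ⟨hum, (mem_filter.1 hu).2.2⟩
      · rintro rfl
        exact ⟨mem_filter.2 ⟨mem_univ _, ⟨m, hwm, hm⟩, hwb⟩, hwm⟩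
    calc ∑ m ∈ lns inc a, (F.filter fun u => inc u m).card
        = ∑ _m ∈ lns inc a, 1 := sum_congr rfl h1
      _ = t + 1 := by rw [sum_const, smul_eq_mul, mul_one, card_lns hGQ a]
  · intro m hm n hn hmn
    simp only [disjoint_left]
    intro u hum hun
    rw [mem_filter] at hum hun
    rw [mem_coe, mem_lns] at hm hn
    exact hmn (hGQ.unique_line (hna u hum.1) hum.2 hm hun.2 hn)

/-- the point-perp of a single point -/
theorem card_point_perp (hGQ : IsGenQuadrangle inc s t) (x : P) :
    (univ.filter fun z => Coll inc z x).card = 1 + (t + 1) * s := by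
  have hset : univ.filter (fun z => Coll inc z x)
      = insert x ((lns inc x).biUnion fun m => (pts inc m).erase x) := by
    ext z
    simp only [mem_filter, mem_univ, true_and, mem_insert, mem_biUnion, mem_erase, mem_pts,
      mem_lns]
    constructor
    · rintro ⟨m, hzm, hxm⟩
      by_cases hz : z = x
      · exact Or.inl hz
      · exact Or.inr ⟨m, hxm, hz, hzm⟩
    · rintro (rfl | ⟨m, hxm, hz, hzm⟩)
      · exact coll_self hGQ _
      · exact ⟨m, hzm, hxm⟩
  have hnm : x ∉ (lns inc x).biUnion fun m => (pts inc m).erase x := by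
    simp only [mem_biUnion, mem_erase]
    rintro ⟨m, -, h, -⟩
    exact h rfl
  rw [hset, card_insert_of_notMem hnm, card_pencil hGQ x _ (fun m hm => mem_lns.1 hm),
    card_lns hGQ x]
  omega

/-- the number of points of a GQ -/
theorem card_points (hGQ : IsGenQuadrangle inc s t) (ℓ0 : L) :
    (univ : Finset P).card = (s + 1) * (s * t + 1) := by
  have hsplit := card_filter_add_card_filter_not
    (s := (univ : Finset P)) (p := fun z => inc z ℓ0)
  set off := univ.filter fun z => ¬ inc z ℓ0 with hoff
  have hcov : off = (pts inc ℓ0).biUnion fun y => off.filter fun z => Coll inc z y := by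
    ext z
    simp only [hoff, mem_biUnion, mem_filter, mem_univ, true_and, mem_pts]
    constructor
    · intro hz
      obtain ⟨q, ⟨hq1, hq2, hq3⟩, -⟩ := hGQ.proj hz
      exact ⟨q.1, hq3, hz, q.2, hq1, hq2⟩
    · rintro ⟨y, -, hz, -⟩; exact hz
  have hdisj : ∀ y ∈ pts inc ℓ0, ∀ y' ∈ pts inc ℓ0, y ≠ y' →
      Disjoint (off.filter fun z => Coll inc z y) (off.filter fun z => Coll inc z y') := by
    intro y hy y' hy' hne
    rw [mem_pts] at hy hy'
    simp only [disjoint_left, mem_filter, hoff, mem_univ, true_and]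
    rintro z ⟨hz, m, hzm, hym⟩ ⟨-, m', hzm', hym'⟩
    obtain ⟨q, -, hu⟩ := hGQ.proj hz
    have e1 := hu (y, m) ⟨hzm, hym, hy⟩
    have e2 := hu (y', m') ⟨hzm', hym', hy'⟩
    exact hne (congrArg Prod.fst (e1.trans e2.symm))
  have hfib : ∀ y ∈ pts inc ℓ0, (off.filter fun z => Coll inc z y).card = t * s := by
    intro y hy
    rw [mem_pts] at hy
    have hset : (off.filter fun z => Coll inc z y)
        = ((lns inc y).erase ℓ0).biUnion fun m => (pts inc m).erase y := by
      ext z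
      simp only [hoff, mem_filter, mem_univ, true_and, mem_biUnion, mem_erase, mem_lns, mem_pts]
      constructor
      · rintro ⟨hz, m, hzm, hym⟩
        have hzy : z ≠ y := fun h => hz (h ▸ hy)
        have hml : m ≠ ℓ0 := fun h => hz (h ▸ hzm)
        exact ⟨m, ⟨hml, hym⟩, hzy, hzm⟩
      · rintro ⟨m, ⟨hml, hym⟩, hzy, hzm⟩
        refine ⟨fun hzl => hml ?_, m, hzm, hym⟩
        exact hGQ.unique_line hzy hzm hym hzl hy
    rw [hset, card_pencil hGQ y _ (fun m hm => mem_lns.1 (mem_of_mem_erase hm)),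
      card_erase_of_mem (mem_lns.2 hy), card_lns hGQ, Nat.add_sub_cancel]
  have hoffcard : off.card = (s + 1) * (t * s) := by
    rw [hcov, card_biUnion hdisj]
    calc ∑ y ∈ pts inc ℓ0, (off.filter fun z => Coll inc z y).card
        = ∑ _y ∈ pts inc ℓ0, t * s := sum_congr rfl hfib
      _ = (s + 1) * (t * s) := by rw [sum_const, smul_eq_mul, card_pts hGQ]
  have hkey : (univ.filter fun z => inc z ℓ0).card = s + 1 := card_pts hGQ ℓ0
  have : (s + 1) + (s + 1) * (t * s) = (s + 1) * (s * t + 1) := by ring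
  omega

set_option maxHeartbeats 1000000 in
/-- Higman inequality -/
theorem higman (hGQ : IsGenQuadrangle inc s t) (hs : 2 ≤ s) (ht : 2 ≤ t) (x : P) :
    t ≤ s ^ 2 := by
  -- find a line, and compute the number of points
  obtain ⟨ℓ0, hl0⟩ : (lns inc x).Nonempty := by
    rw [← card_pos, card_lns hGQ]; omega
  have hPcard : (univ : Finset P).card = (s + 1) * (s * t + 1) := card_points hGQ ℓ0
  -- find a point `y` not collinear with `x`
  have hlt : (univ.filter fun z => Coll inc z x).card < (univ : Finset P).card := by
    rw [card_point_perp hGQ x, hPcard]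
    have h5 : 0 < s * s * t := Nat.mul_pos (Nat.mul_pos (by omega) (by omega)) (by omega)
    nlinarith [h5]
  have hy : ∃ y, ¬ Coll inc y x := by
    by_contra h
    push_neg at h
    rw [filter_true_of_mem (fun z _ => h z)] at hlt
    exact lt_irrefl _ hlt
  obtain ⟨y, hyx⟩ := hy
  have hxy : ¬ Coll inc x y := fun h => hyx h.symm
  have hxney : x ≠ y := by rintro rfl; exact hxy (coll_self hGQ x)
  -- the perp of x and y
  set F := univ.filter fun u => Coll inc u x ∧ Coll inc u y with hF
  have hFcard : F.card = t + 1 := card_perp hGQ hxy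
  -- the set of points not collinear with either
  set T := univ.filter fun z => ¬ Coll inc z x ∧ ¬ Coll inc z y with hT
  -- cardinality of T
  have hN : T.card + 2 * (1 + (t + 1) * s) = (s + 1) * (s * t + 1) + (t + 1) := by
    set cx := univ.filter fun z => Coll inc z x with hcx
    set cy := univ.filter fun z => Coll inc z y with hcy
    have h1 : cx.card = 1 + (t + 1) * s := card_point_perp hGQ x
    have h2 : cy.card = 1 + (t + 1) * s := card_point_perp hGQ y
    have hUI : (cx ∪ cy).card + (cx ∩ cy).card = cx.card + cy.card :=
      card_union_add_card_inter _ _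
    have hIF : cx ∩ cy = F := by
      ext u
      simp only [hcx, hcy, hF, mem_inter, mem_filter, mem_univ, true_and]
    have hcompl : (cx ∪ cy).card + T.card = (univ : Finset P).card := by
      have he : T = (cx ∪ cy)ᶜ := by
        ext z
        simp only [hT, hcx, hcy, mem_compl, mem_union, mem_filter, mem_univ, true_and, not_or]
      rw [he]
      exact (card_add_card_compl _).trans card_univ.symm
    rw [hIF, hFcard] at hUI
    omega
  -- the perp-degree function
  set d : P → ℕ := fun z => (F.filter fun u => Coll inc z u).card with hd
  -- inner count for the first sum
  have hinner : ∀ u ∈ F, (T.filter fun z => Coll inc z u).card = (t - 1) * s := by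
    intro u hu
    obtain ⟨hux, huy⟩ := (mem_filter.1 hu).2
    obtain ⟨mx, humx, hxmx⟩ := hux
    obtain ⟨my, humy, hymy⟩ := huy
    have hunex : u ≠ x := by rintro rfl; exact hxy ⟨my, humy, hymy⟩
    have huney : u ≠ y := by rintro rfl; exact hyx ⟨mx, humx, hxmx⟩
    have hmxy : mx ≠ my := by rintro rfl; exact hxy ⟨mx, hxmx, hymy⟩
    have hKcard : (((lns inc u).erase mx).erase my).card = t - 1 := by
      rw [card_erase_of_mem (mem_erase.2 ⟨Ne.symm hmxy, mem_lns.2 humy⟩),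
        card_erase_of_mem (mem_lns.2 humx), card_lns hGQ]
      omega
    have hset : T.filter (fun z => Coll inc z u)
        = (((lns inc u).erase mx).erase my).biUnion fun n => (pts inc n).erase u := by
      ext z
      simp only [hT, mem_filter, mem_univ, true_and, mem_biUnion, mem_erase, mem_pts, mem_lns,
        and_assoc]
      constructor
      · rintro ⟨hzx, hzy, n, hzn, hun⟩
        have hzu : z ≠ u := by rintro rfl; exact hzx ⟨mx, humx, hxmx⟩
        have h1 : n ≠ mx := by rintro rfl; exact hzx ⟨n, hzn, hxmx⟩
        have h2 : n ≠ my := by rintro rfl; exact hzy ⟨n, hzn, hymy⟩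
        exact ⟨n, h2, h1, hun, hzu, hzn⟩
      · rintro ⟨n, h2, h1, hun, hzu, hzn⟩
        have hxnot : ¬ inc x n := fun hxn => h1 (hGQ.unique_line hunex hun hxn humx hxmx)
        have hynot : ¬ inc y n := fun hyn => h2 (hGQ.unique_line huney hun hyn humy hymy)
        refine ⟨?_, ?_, n, hzn, hun⟩
        · rintro ⟨q, hzq, hxq⟩
          obtain ⟨w, -, hw⟩ := exists_unique_proj_pt hGQ hxnot
          exact hzu ((hw z ⟨hzn, q, hzq, hxq⟩).trans (hw u ⟨hun, mx, humx, hxmx⟩).symm)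
        · rintro ⟨q, hzq, hyq⟩
          obtain ⟨w, -, hw⟩ := exists_unique_proj_pt hGQ hynot
          exact hzu ((hw z ⟨hzn, q, hzq, hyq⟩).trans (hw u ⟨hun, my, humy, hymy⟩).symm)
    rw [hset, card_pencil hGQ u _
      (fun n hn => mem_lns.1 (mem_of_mem_erase (mem_of_mem_erase hn))), hKcard]
  -- first sum
  have hSum1 : ∑ z ∈ T, d z = (t + 1) * ((t - 1) * s) := by
    have hswap : ∑ z ∈ T, d z = ∑ u ∈ F, (T.filter fun z => Coll inc z u).card := by
      simp only [hd, card_filter]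
      exact sum_comm
    rw [hswap]
    calc ∑ u ∈ F, (T.filter fun z => Coll inc z u).card
        = ∑ _u ∈ F, (t - 1) * s := sum_congr rfl hinner
      _ = (t + 1) * ((t - 1) * s) := by rw [sum_const, smul_eq_mul, hFcard]
  -- second sum
  have hinner2 : ∀ p ∈ F.offDiag,
      (T.filter fun z => Coll inc z p.1 ∧ Coll inc z p.2).card = t - 1 := by
    rintro ⟨u, v⟩ hp
    obtain ⟨hu, hv, hne⟩ := mem_offDiag.1 hp
    simp only at hne ⊢
    have huv : ¬ Coll inc u v :=
      perp_coclique hGQ hxy (mem_filter.1 hu).2 (mem_filter.1 hv).2 hne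
    have hxF : Coll inc x u ∧ Coll inc x v :=
      ⟨((mem_filter.1 hu).2.1).symm, ((mem_filter.1 hv).2.1).symm⟩
    have hyF : Coll inc y u ∧ Coll inc y v :=
      ⟨((mem_filter.1 hu).2.2).symm, ((mem_filter.1 hv).2.2).symm⟩
    have hset : T.filter (fun z => Coll inc z u ∧ Coll inc z v)
        = (((univ.filter fun w => Coll inc w u ∧ Coll inc w v).erase x).erase y) := by
      ext z
      simp only [hT, mem_filter, mem_univ, true_and, mem_erase, and_assoc]
      constructor
      · rintro ⟨hzx, hzy, hzu, hzv⟩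
        have hznx : z ≠ x := by rintro rfl; exact hzx (coll_self hGQ z)
        have hzny : z ≠ y := by rintro rfl; exact hzy (coll_self hGQ z)
        exact ⟨hzny, hznx, hzu, hzv⟩
      · rintro ⟨hzny, hznx, hzu, hzv⟩
        refine ⟨?_, ?_, hzu, hzv⟩
        · exact fun hc => (perp_coclique hGQ huv ⟨hzu, hzv⟩ hxF hznx) (hc)
        · exact fun hc => (perp_coclique hGQ huv ⟨hzu, hzv⟩ hyF hzny) (hc)
    rw [hset, card_erase_of_mem, card_erase_of_mem, card_perp hGQ huv]
    · omega
    · exact mem_filter.2 ⟨mem_univ x, hxF⟩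
    · exact mem_erase.2 ⟨Ne.symm hxney, mem_filter.2 ⟨mem_univ y, hyF⟩⟩
  have hSum2 : ∑ z ∈ T, d z ^ 2
      = (t + 1) * ((t - 1) * s) + ((t + 1) * (t + 1) - (t + 1)) * (t - 1) := by
    have hsq : ∀ n : ℕ, n ^ 2 = n + n * (n - 1) := by
      rintro (_ | k)
      · rfl
      · rw [Nat.succ_sub_one]; ring
    have hmul : ∀ n : ℕ, n * (n - 1) = n * n - n := by
      rintro (_ | k)
      · rfl
      · rw [Nat.succ_sub_one, Nat.mul_succ, Nat.add_sub_cancel]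
    have hsplit : ∑ z ∈ T, d z ^ 2 = ∑ z ∈ T, d z + ∑ z ∈ T, d z * (d z - 1) := by
      rw [← sum_add_distrib]
      exact sum_congr rfl fun z _ => hsq (d z)
    have hoffd : ∀ z, d z * (d z - 1)
        = (F.offDiag.filter fun p => Coll inc z p.1 ∧ Coll inc z p.2).card := by
      intro z
      have he : (F.filter fun u => Coll inc z u).offDiag
          = F.offDiag.filter fun p => Coll inc z p.1 ∧ Coll inc z p.2 := by
        ext p
        simp only [mem_offDiag, mem_filter]
        tauto
      rw [← he, offDiag_card, ← hmul]
    have hswap2 : ∑ z ∈ T, d z * (d z - 1)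
        = ∑ p ∈ F.offDiag, (T.filter fun z => Coll inc z p.1 ∧ Coll inc z p.2).card := by
      simp only [hoffd, card_filter]
      exact sum_comm
    have hsum2' : ∑ z ∈ T, d z * (d z - 1) = ((t + 1) * (t + 1) - (t + 1)) * (t - 1) := by
      rw [hswap2]
      calc ∑ p ∈ F.offDiag, (T.filter fun z => Coll inc z p.1 ∧ Coll inc z p.2).card
          = ∑ _p ∈ F.offDiag, (t - 1) := sum_congr rfl hinner2
        _ = ((t + 1) * (t + 1) - (t + 1)) * (t - 1) := by
            rw [sum_const, smul_eq_mul, offDiag_card, hFcard]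
    rw [hsplit, hSum1, hsum2']
  -- Cauchy-Schwarz
  have hCS : (∑ z ∈ T, d z) ^ 2 ≤ T.card * ∑ z ∈ T, d z ^ 2 := sq_sum_le_card_mul_sum_sq
  rw [hSum1, hSum2] at hCS
  -- now pure integer arithmetic
  obtain ⟨k, rfl⟩ : ∃ k, t = k + 2 := ⟨t - 2, by omega⟩
  have e1 : k + 2 - 1 = k + 1 := by omega
  have e2 : (k + 2 + 1) * (k + 2 + 1) - (k + 2 + 1) = (k + 2 + 1) * (k + 2) := by
    rw [show (k + 2 + 1) * (k + 2 + 1) = (k + 2 + 1) * (k + 2) + (k + 2 + 1) by ring,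
      Nat.add_sub_cancel]
  rw [e1, e2] at hCS
  have hNZ : ((T.card : ℤ)) = (s : ℤ) * s * ((k : ℤ) + 2) - s * ((k : ℤ) + 2) - s + ((k : ℤ) + 2) := by
    have hc : ((T.card : ℤ)) + 2 * (1 + (((k : ℤ) + 2) + 1) * s)
        = ((s : ℤ) + 1) * (s * ((k : ℤ) + 2) + 1) + (((k : ℤ) + 2) + 1) := by
      exact_mod_cast hN
    linear_combination hc
  have hCSZ : ((((k : ℤ) + 2 + 1)) * (((k : ℤ) + 1) * s)) ^ 2
      ≤ (T.card : ℤ) * (((k : ℤ) + 2 + 1) * (((k : ℤ) + 1) * s)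
        + (((k : ℤ) + 2 + 1) * ((k : ℤ) + 2)) * ((k : ℤ) + 1)) := by
    exact_mod_cast hCS
  rw [hNZ] at hCSZ
  have hid : ((s : ℤ) * s * ((k : ℤ) + 2) - s * ((k : ℤ) + 2) - s + ((k : ℤ) + 2))
        * (((k : ℤ) + 2 + 1) * (((k : ℤ) + 1) * s)
          + (((k : ℤ) + 2 + 1) * ((k : ℤ) + 2)) * ((k : ℤ) + 1))
        - ((((k : ℤ) + 2 + 1)) * (((k : ℤ) + 1) * s)) ^ 2
      = ((((k : ℤ) + 2) * ((k : ℤ) + 2) - 1) * ((k : ℤ) + 2) * ((s : ℤ) - 1))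
        * ((s : ℤ) * s - ((k : ℤ) + 2)) := by ring
  have hkey : (0 : ℤ) ≤ ((((k : ℤ) + 2) * ((k : ℤ) + 2) - 1) * ((k : ℤ) + 2) * ((s : ℤ) - 1))
      * ((s : ℤ) * s - ((k : ℤ) + 2)) := by linarith [hCSZ, hid]
  have hS : (2 : ℤ) ≤ (s : ℤ) := by exact_mod_cast hs
  have hK : (0 : ℤ) ≤ (k : ℤ) := Int.natCast_nonneg k
  have hpos : (0 : ℤ) < (((k : ℤ) + 2) * ((k : ℤ) + 2) - 1) * ((k : ℤ) + 2) * ((s : ℤ) - 1) := by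
    have p1 : (0 : ℤ) < ((k : ℤ) + 2) * ((k : ℤ) + 2) - 1 := by nlinarith
    exact mul_pos (mul_pos p1 (by linarith)) (by linarith)
  by_contra hcon
  push_neg at hcon
  have hneg : (s : ℤ) * s - ((k : ℤ) + 2) < 0 := by
    have hc2 : ((s : ℤ)) ^ 2 < (k : ℤ) + 2 := by exact_mod_cast hcon
    nlinarith [hc2]
  have := mul_neg_of_pos_of_neg hpos hneg
  linarith [hkey, this]

end Counting

/-- the dual of a GQ -/
theorem dual (hGQ : IsGenQuadrangle inc s t) :
    IsGenQuadrangle (fun (m : L) (x : P) => inc x m) t s := by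
  constructor
  · exact hGQ.lines_per_pt
  · exact hGQ.pts_per_line
  · intro m m' hmm p q h1 h2 h3 h4
    by_contra hpq
    exact hmm (hGQ.unique_line hpq h1 h3 h2 h4)
  · intro m x hxm
    obtain ⟨q, ⟨h1, h2, h3⟩, hu⟩ := hGQ.proj hxm
    refine ⟨(q.2, q.1), ⟨h3, h2, h1⟩, ?_⟩
    rintro ⟨n, z⟩ ⟨k1, k2, k3⟩
    have := hu (z, n) ⟨k3, k2, k1⟩
    rw [← this]

theorem natcard_points [Finite P] [Finite L] (hGQ : IsGenQuadrangle inc s t) (ℓ0 : L) :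
    Nat.card P = (s + 1) * (s * t + 1) := by
  letI := Fintype.ofFinite P
  letI := Fintype.ofFinite L
  rw [Nat.card_eq_fintype_card, ← Finset.card_univ]
  exact card_points hGQ ℓ0

theorem higman' [Finite P] [Finite L] (hGQ : IsGenQuadrangle inc s t) (hs : 2 ≤ s)
    (ht : 2 ≤ t) (x : P) : t ≤ s ^ 2 := by
  letI := Fintype.ofFinite P
  letI := Fintype.ofFinite L
  exact higman hGQ hs ht x

theorem arith1 {s t : ℕ} (hs : 2 ≤ s) (ht : 2 ≤ t) (h : t ≤ s ^ 2) :
    ((t + 1) * (t * s + 1)) ^ 3 < ((s + 1) * (s * t + 1)) ^ 4 := by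
  have h1 : (t + 1) ^ 3 < (s + 1) ^ 4 * (s * t + 1) := by
    have h2 : (t + 1) ^ 2 ≤ (s ^ 2 + 1) ^ 2 := Nat.pow_le_pow_left (by omega) 2
    have h3 : (s ^ 2 + 1) ^ 2 < (s + 1) ^ 4 := by nlinarith
    have h4 : t + 1 ≤ s * t + 1 := by nlinarith
    calc (t + 1) ^ 3 = (t + 1) ^ 2 * (t + 1) := by ring
      _ ≤ (s ^ 2 + 1) ^ 2 * (s * t + 1) := Nat.mul_le_mul h2 h4
      _ < (s + 1) ^ 4 * (s * t + 1) := by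
          exact mul_lt_mul_of_pos_right h3 (by positivity)
  calc ((t + 1) * (t * s + 1)) ^ 3 = (t + 1) ^ 3 * (s * t + 1) ^ 3 := by
        rw [show t * s = s * t by ring]; ring
    _ < ((s + 1) ^ 4 * (s * t + 1)) * (s * t + 1) ^ 3 :=
        mul_lt_mul_of_pos_right h1 (by positivity)
    _ = ((s + 1) * (s * t + 1)) ^ 4 := by ring

end GQAux


/-- If a finite group `G` acts by automorphisms on a finite thick GQ, transitively on
points and on lines, then the point and line stabilizers satisfy
`|G_α|⁴ < |G_ℓ|³ · |G|` and `|G_ℓ|⁴ < |G_α|³ · |G|`. -/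
theorem stmt11 {P L : Type*} [Finite P] [Finite L] {inc : P → L → Prop} {s t : ℕ}
    (hGQ : IsGenQuadrangle inc s t) (hs : 2 ≤ s) (ht : 2 ≤ t)
    (G : Type*) [Group G] [Finite G] [MulAction G P] [MulAction G L]
    (hinc : ∀ (g : G) (x : P) (ℓ : L), inc (g • x) (g • ℓ) ↔ inc x ℓ)
    (htransP : MulAction.IsPretransitive G P)
    (htransL : MulAction.IsPretransitive G L)
    (α : P) (ℓ : L) :
    Nat.card (MulAction.stabilizer G α) ^ 4 <
        Nat.card (MulAction.stabilizer G ℓ) ^ 3 * Nat.card G ∧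
    Nat.card (MulAction.stabilizer G ℓ) ^ 4 <
        Nat.card (MulAction.stabilizer G α) ^ 3 * Nat.card G := by
  haveI := htransP
  haveI := htransL
  have hP : Nat.card P = (s + 1) * (s * t + 1) := GQAux.natcard_points hGQ ℓ
  have hL : Nat.card L = (t + 1) * (t * s + 1) := GQAux.natcard_points (GQAux.dual hGQ) α
  have hts : t ≤ s ^ 2 := GQAux.higman' hGQ hs ht α
  have hst : s ≤ t ^ 2 := GQAux.higman' (GQAux.dual hGQ) ht hs ℓ
  set a := Nat.card (MulAction.stabilizer G α) with ha'
  set b := Nat.card (MulAction.stabilizer G ℓ) with hb'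
  set n := Nat.card G with hn'
  have ha : 0 < a := Nat.card_pos
  have hb : 0 < b := Nat.card_pos
  have hOP : (s + 1) * (s * t + 1) * a = n := by
    rw [← hP, ha', hn', ← MulAction.index_stabilizer_of_transitive G α]
    exact Subgroup.index_mul_card _
  have hOL : (t + 1) * (t * s + 1) * b = n := by
    rw [← hL, hb', hn', ← MulAction.index_stabilizer_of_transitive G ℓ]
    exact Subgroup.index_mul_card _
  have key1 : ((t + 1) * (t * s + 1)) ^ 3 < ((s + 1) * (s * t + 1)) ^ 4 :=
    GQAux.arith1 hs ht hts
  have key2 : ((s + 1) * (s * t + 1)) ^ 3 < ((t + 1) * (t * s + 1)) ^ 4 :=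
    GQAux.arith1 ht hs hst
  constructor
  · have calc1 : ((t + 1) * (t * s + 1)) ^ 3 * a ^ 4
        < ((t + 1) * (t * s + 1)) ^ 3 * (b ^ 3 * n) := by
      calc ((t + 1) * (t * s + 1)) ^ 3 * a ^ 4
          < ((s + 1) * (s * t + 1)) ^ 4 * a ^ 4 := mul_lt_mul_of_pos_right key1 (by positivity)
        _ = ((s + 1) * (s * t + 1) * a) ^ 4 := by ring
        _ = n ^ 4 := by rw [hOP]
        _ = ((t + 1) * (t * s + 1) * b) ^ 3 * n := by rw [hOL]; ring
        _ = ((t + 1) * (t * s + 1)) ^ 3 * (b ^ 3 * n) := by ring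
    exact Nat.lt_of_mul_lt_mul_left calc1
  · have calc2 : ((s + 1) * (s * t + 1)) ^ 3 * b ^ 4
        < ((s + 1) * (s * t + 1)) ^ 3 * (a ^ 3 * n) := by
      calc ((s + 1) * (s * t + 1)) ^ 3 * b ^ 4
          < ((t + 1) * (t * s + 1)) ^ 4 * b ^ 4 := mul_lt_mul_of_pos_right key2 (by positivity)
        _ = ((t + 1) * (t * s + 1) * b) ^ 4 := by ring
        _ = n ^ 4 := by rw [hOL]
        _ = ((s + 1) * (s * t + 1) * a) ^ 3 * n := by rw [hOP]; ring
        _ = ((s + 1) * (s * t + 1)) ^ 3 * (a ^ 3 * n) := by ring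
    exact Nat.lt_of_mul_lt_mul_left calc2
end

section
/- There do not exist an odd prime power q ≥ 13 and an integer s ≥ 2 such that 2(s+1)(s²+1) = q(q+1). -/
/-- There are no odd prime power `q ≥ 13` and integer `s ≥ 2` with
`2(s+1)(s²+1) = q(q+1)`. -/
theorem stmt14 : ¬ ∃ p f q s : ℕ, p.Prime ∧ Odd p ∧ 1 ≤ f ∧ q = p ^ f ∧ 13 ≤ q ∧
    2 ≤ s ∧ 2 * (s + 1) * (s ^ 2 + 1) = q * (q + 1) := by
  rintro ⟨p, f, q, s, hp, hodd, hf, hq, h13, hs, heq⟩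
  have hqodd : Odd q := hq ▸ hodd.pow
  have hdvd : q ∣ (s + 1) * (s ^ 2 + 1) := by
    have h2 : q ∣ 2 * ((s + 1) * (s ^ 2 + 1)) := ⟨q + 1, by linarith [heq]⟩
    have hcop : Nat.Coprime q 2 := by
      have : ¬ 2 ∣ q := by
        rw [Nat.two_dvd_ne_zero]; exact Nat.odd_iff.mp hqodd
      exact ((Nat.Prime.coprime_iff_not_dvd Nat.prime_two).mpr this).symm
    exact (Nat.Coprime.dvd_of_dvd_mul_left hcop h2)
  have hnot : ¬ (p ∣ s + 1 ∧ p ∣ s ^ 2 + 1) := by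
    rintro ⟨h1, h2⟩
    have hsq : p ∣ (s + 1) * (s + 1) := Dvd.dvd.mul_right h1 _
    have h3 : (s + 1) * (s + 1) - (s ^ 2 + 1) = 2 * s := by
      have : (s + 1) * (s + 1) = s ^ 2 + 1 + 2 * s := by ring
      omega
    have hps : p ∣ 2 * s := h3 ▸ Nat.dvd_sub hsq h2
    rcases (Nat.Prime.dvd_mul hp).mp hps with h | h
    · have := Nat.le_of_dvd (by norm_num) h
      have := hp.two_le
      interval_cases p
      · exact (fun h => (by norm_num : ¬ Odd 2) h) hodd
    · have hone : p ∣ 1 := by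
        have : s + 1 - s = 1 := by omega
        exact this ▸ Nat.dvd_sub h1 h
      exact hp.one_lt.ne' (Nat.eq_one_of_dvd_one hone)
  by_cases hps : p ∣ s + 1
  · -- then p does not divide s^2+1, so q ∣ s+1, size contradiction
    have hps2 : ¬ p ∣ s ^ 2 + 1 := fun h => hnot ⟨hps, h⟩
    have hcop : Nat.Coprime q (s ^ 2 + 1) := by
      rw [hq]; exact (Nat.Prime.coprime_iff_not_dvd hp |>.mpr hps2).pow_left _
    have hdq : q ∣ s + 1 := hcop.dvd_of_dvd_mul_right hdvd
    have hle : q ≤ s + 1 := Nat.le_of_dvd (by omega) hdq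
    nlinarith [heq, hle, hs, h13]
  · have hcop : Nat.Coprime q (s + 1) := by
      rw [hq]; exact (Nat.Prime.coprime_iff_not_dvd hp |>.mpr hps).pow_left _
    have hdq : q ∣ s ^ 2 + 1 := hcop.dvd_of_dvd_mul_left hdvd
    obtain ⟨k, hk⟩ := hdq
    have hk1 : 1 ≤ k := by
      rcases Nat.eq_zero_or_pos k with h | h
      · rw [h, mul_zero] at hk; omega
      · exact h
    have hq1 : 2 * (s + 1) * k = q + 1 := by
      have : q * (2 * (s + 1) * k) = q * (q + 1) := by
        rw [← heq, hk]; ring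
      exact Nat.eq_of_mul_eq_mul_left (by omega) this
    -- move to integers
    have hs' : (2 : ℤ) ≤ (s : ℤ) := by exact_mod_cast hs
    have hk' : (1 : ℤ) ≤ (k : ℤ) := by exact_mod_cast hk1
    have h7 : (7 : ℤ) ≤ (k : ℤ) * ((s : ℤ) + 1) := by
      have : 14 ≤ 2 * (s + 1) * k := by omega
      have := (by exact_mod_cast this : (14 : ℤ) ≤ 2 * ((s : ℤ) + 1) * k)
      linarith
    have he : (s : ℤ) ^ 2 + 1 + k = 2 * k ^ 2 * ((s : ℤ) + 1) := by
      have hkz : ((s : ℤ) ^ 2 + 1) = (q : ℤ) * k := by exact_mod_cast hk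
      have hqz : 2 * ((s : ℤ) + 1) * k = (q : ℤ) + 1 := by exact_mod_cast hq1
      nlinarith [hkz, hqz]
    have hge : 2 * (k : ℤ) ^ 2 ≤ (s : ℤ) := by nlinarith
    have hle : (s : ℤ) ≤ 2 * (k : ℤ) ^ 2 := by nlinarith
    have hseq : (s : ℤ) = 2 * (k : ℤ) ^ 2 := le_antisymm hle hge
    have hk1' : (k : ℤ) = 1 := by nlinarith
    rw [hseq, hk1'] at h7
    norm_num at h7
end

section
/- For every integer f ≥ 2, there is no integer s ≥ 2 such that (s+1)(s²+1) = 2^{f−1}·(2^f + 1). -/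
/-- For every integer `f ≥ 2` there is no integer `s ≥ 2` with
`(s+1)(s²+1) = 2^(f-1) · (2^f + 1)`. -/
theorem stmt15 : ∀ f : ℕ, 2 ≤ f →
    ¬ ∃ s : ℕ, 2 ≤ s ∧ (s + 1) * (s ^ 2 + 1) = 2 ^ (f - 1) * (2 ^ f + 1) := by
  intro f hf
  rintro ⟨s, hs, heq⟩
  -- RHS is even
  have h2rhs : 2 ∣ 2 ^ (f - 1) * (2 ^ f + 1) :=
    (dvd_pow_self 2 (by omega)).mul_right _
  rw [← heq] at h2rhs
  -- hence s is odd
  have hsodd : Odd s := by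
    by_contra h
    rw [Nat.not_odd_iff_even] at h
    have h1 : Odd (s + 1) := h.add_one
    have h2 : Odd (s ^ 2 + 1) := by
      obtain ⟨r, hr⟩ := h
      exact ⟨2 * r ^ 2, by subst hr; ring⟩
    obtain ⟨c, hc⟩ := h1.mul h2
    obtain ⟨d, hd⟩ := h2rhs
    omega
  obtain ⟨k, hk⟩ := hsodd
  subst hk
  set e := f - 1 with he
  have hf' : f = e + 1 := by omega
  have he1 : 1 ≤ e := by omega
  rw [hf'] at heq
  rcases Nat.lt_or_ge e 2 with hlt | hge
  · -- e = 1, RHS = 10, LHS divisible by 4 and ≥ 40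
    have heq1 : e = 1 := by omega
    rw [heq1] at heq
    norm_num at heq
    have hk1 : 1 ≤ k := by omega
    nlinarith [heq, hk1]
  · -- e ≥ 2
    set a := 2 ^ (e - 2) with ha
    have hpowe : 2 ^ e = 4 * a := by
      have h1 : 2 ^ e = 2 ^ (e - 2) * 2 ^ 2 := by
        rw [← pow_add]; congr 1; omega
      rw [ha]; omega
    have hpowe1 : 2 ^ (e + 1) = 8 * a := by
      rw [pow_succ, hpowe]; ring
    have ha1 : 1 ≤ a := Nat.one_le_two_pow
    rw [hpowe, hpowe1] at heq
    -- cancel the factor 4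
    have heq2 : (k + 1) * (2 * k ^ 2 + 2 * k + 1) = a * (8 * a + 1) := by
      have h4 : 4 * ((k + 1) * (2 * k ^ 2 + 2 * k + 1)) = 4 * (a * (8 * a + 1)) := by
        nlinarith [heq]
      omega
    -- a divides k+1
    have hodd : Nat.Coprime a (2 * k ^ 2 + 2 * k + 1) := by
      apply Nat.Coprime.pow_left
      rw [Nat.coprime_two_left]
      exact ⟨k ^ 2 + k, by ring⟩
    have hdvd : a ∣ (k + 1) * (2 * k ^ 2 + 2 * k + 1) := heq2 ▸ Dvd.intro _ rfl
    have hdvd2 : a ∣ k + 1 := (Nat.Coprime.dvd_of_dvd_mul_right hodd) hdvd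
    obtain ⟨m, hm⟩ := hdvd2
    rw [hm] at heq2
    have heq3 : m * (2 * k ^ 2 + 2 * k + 1) = 8 * a + 1 := by
      have := Nat.eq_of_mul_eq_mul_left (show 0 < a by omega)
        (show a * (m * (2 * k ^ 2 + 2 * k + 1)) = a * (8 * a + 1) by
          rw [← heq2]; ring)
      exact this
    have hm0 : 1 ≤ m := by
      rcases Nat.eq_zero_or_pos m with h | h
      · simp [h] at hm
      · exact h
    rcases Nat.lt_or_ge m 2 with hm1 | hm2
    · -- m = 1
      have hm1' : m = 1 := by omega
      subst hm1'
      rw [mul_one] at hm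
      -- so k + 1 = a and 2k²+2k+1 = 8a+1
      have hk4 : k = 4 := by nlinarith [heq3, hm]
      have ha5 : a = 5 := by omega
      -- a = 2^(e-2) = 5 impossible
      rcases Nat.eq_zero_or_pos (e - 2) with h0 | h0
      · rw [ha, h0] at ha5; norm_num at ha5
      · have : 2 ∣ a := ha ▸ dvd_pow_self 2 (by omega)
        omega
    · -- m ≥ 2 : LHS too big
      have hka : 2 * a ≤ k + 1 := by
        calc 2 * a = a * 2 := by ring
        _ ≤ a * m := Nat.mul_le_mul_left a hm2
        _ = k + 1 := hm.symm
      nlinarith [heq3, hka, ha1, hm2, sq_nonneg k]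
end

section
/- Let q be an odd prime power and let s ≥ 2 be an integer such that 2(s+1)(s²+1) = q(q−1). Then s = 9 and q = 41. -/
private lemma stmt16_aux (S M : ℤ) (hS : 2 ≤ S) (hM : 3 ≤ M)
    (he : S ^ 2 + 1 = (2 * (S + 1) * M + 1) * M) : False := by
  have hsgt : 2 * M ^ 2 < S := by
    by_contra hle
    push_neg at hle
    nlinarith [mul_nonneg (by linarith : (0:ℤ) ≤ S) (by linarith : (0:ℤ) ≤ 2 * M ^ 2 - S)]
  have hT2 : (S - M ^ 2) ^ 2 = M ^ 4 + 2 * M ^ 2 + M - 1 := by linear_combination he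
  set T : ℤ := S - M ^ 2 with hT
  have hT0 : 0 ≤ T := by rw [hT]; nlinarith
  rcases le_or_gt T (M ^ 2 + 1) with hc | hc
  · nlinarith [mul_nonneg (by linarith : (0:ℤ) ≤ M ^ 2 + 1 - T)
      (by linarith : (0:ℤ) ≤ M ^ 2 + 1 + T), hT2]
  · have hc2 : M ^ 2 + 2 ≤ T := by linarith [Int.lt_iff_add_one_le.mp hc]
    nlinarith [mul_nonneg (by linarith : (0:ℤ) ≤ T - (M ^ 2 + 2))
      (by linarith : (0:ℤ) ≤ T + (M ^ 2 + 2)), hT2]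

/-- If `q` is an odd prime power and `s ≥ 2` satisfies `2(s+1)(s²+1) = q(q-1)`, then
`s = 9` and `q = 41`. -/
theorem stmt16 (p f q s : ℕ) (hp : p.Prime) (hodd : Odd p) (hf : 1 ≤ f) (hq : q = p ^ f)
    (hs : 2 ≤ s) (h : 2 * (s + 1) * (s ^ 2 + 1) = q * (q - 1)) :
    s = 9 ∧ q = 41 := by
  have hp2 : p ≠ 2 := by rintro rfl; rw [Nat.odd_iff] at hodd; omega
  have hp3 : 3 ≤ p := by have := hp.two_le; omega
  have hq3 : 3 ≤ q := by
    calc 3 ≤ p := hp3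
    _ ≤ p ^ f := Nat.le_self_pow (by omega) p
    _ = q := hq.symm
  have hqodd : Odd q := by rw [hq]; exact hodd.pow
  have h1 : q ∣ ((s + 1) * (s ^ 2 + 1)) * 2 := ⟨q - 1, by linarith [h]⟩
  have hcop2 : Nat.Coprime q 2 := hqodd.coprime_two_right
  have hqdvd : q ∣ (s + 1) * (s ^ 2 + 1) := (Nat.Coprime.dvd_of_dvd_mul_right hcop2 h1)
  by_cases hps : p ∣ s + 1
  · -- then p ∤ s²+1, so q ∣ s+1, size contradiction
    exfalso
    have key : (s + 1) * (s - 1) + 2 = s ^ 2 + 1 := by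
      obtain ⟨u, rfl⟩ : ∃ u, s = u + 2 := ⟨s - 2, by omega⟩
      have : (u + 2) - 1 = u + 1 := by omega
      rw [this]; ring
    have hns : ¬ p ∣ s ^ 2 + 1 := by
      intro h2
      rw [← key] at h2
      have hd2 : p ∣ 2 := (Nat.dvd_add_right (hps.mul_right _)).mp h2
      have := Nat.le_of_dvd (by norm_num) hd2
      omega
    have hcop : Nat.Coprime q (s ^ 2 + 1) := by
      rw [hq]; exact Nat.Coprime.pow_left f (hp.coprime_iff_not_dvd.mpr hns)
    have hq1 : q ∣ s + 1 := (Nat.Coprime.dvd_of_dvd_mul_right hcop hqdvd)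
    have hle : q ≤ s + 1 := Nat.le_of_dvd (by omega) hq1
    obtain ⟨r, hr⟩ : ∃ r, q = r + 1 := ⟨q - 1, by omega⟩
    rw [hr] at h hle
    simp at h
    nlinarith [h, hle, hs]
  · -- q ∣ s²+1
    have hcop : Nat.Coprime q (s + 1) := by
      rw [hq]; exact Nat.Coprime.pow_left f (hp.coprime_iff_not_dvd.mpr hps)
    have hq1 : q ∣ s ^ 2 + 1 := (Nat.Coprime.dvd_of_dvd_mul_left hcop hqdvd)
    obtain ⟨m, hm⟩ := hq1
    have hm1 : 1 ≤ m := by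
      rcases Nat.eq_zero_or_pos m with h0 | h0
      · rw [h0, mul_zero] at hm; omega
      · exact h0
    -- cancel q in h
    have hq2 : q - 1 = 2 * (s + 1) * m := by
      have hc : q * (q - 1) = q * (2 * (s + 1) * m) := by
        rw [← h, hm]; ring
      exact Nat.eq_of_mul_eq_mul_left (by omega) hc
    have hqval : q = 2 * (s + 1) * m + 1 := by omega
    have heq : s ^ 2 + 1 = (2 * (s + 1) * m + 1) * m := by rw [← hqval]; exact hm
    have hcases : m = 1 ∨ m = 2 ∨ 3 ≤ m := by omega
    rcases hcases with rfl | rfl | hm3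
    · -- m = 1 : s² = 2s + 2, impossible
      exfalso
      have e : s ^ 2 = 2 * s + 2 := by linarith [heq]
      have hd : s ∣ 2 := by
        have h1 : s ∣ s ^ 2 := dvd_pow_self s (by norm_num)
        rw [e] at h1
        exact (Nat.dvd_add_right ⟨2, by ring⟩).mp h1
      have : s ≤ 2 := Nat.le_of_dvd (by norm_num) hd
      have hs2 : s = 2 := by omega
      rw [hs2] at e; norm_num at e
    · -- m = 2 : s² = 8s + 9 ⇒ s = 9, q = 41
      have e : s ^ 2 = 8 * s + 9 := by nlinarith [heq]
      have h9 : s ≤ 9 := by nlinarith [e]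
      have h8 : 8 < s := by nlinarith [e]
      have hs9 : s = 9 := by omega
      refine ⟨hs9, ?_⟩
      rw [hqval, hs9]
    · -- m ≥ 3 : impossible
      have heZ : (s : ℤ) ^ 2 + 1 = (2 * ((s : ℤ) + 1) * m + 1) * m := by exact_mod_cast heq
      exact (stmt16_aux s m (by exact_mod_cast hs) (by exact_mod_cast hm3) heZ).elim
end

section
/- Let p ≥ 7 be a prime, let f ≥ 1 be an integer, set q = p^f, and let s ≥ 2 be an integer such that 120(s+1)(s²+1) = q(q²−1). Then p ≡ 1 (mod 4). -/
/-- If `p ≥ 7` is prime, `q = p ^ f` with `f ≥ 1`, and `s ≥ 2` satisfies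
`120(s+1)(s²+1) = q(q²-1)`, then `p ≡ 1 (mod 4)`. -/
theorem stmt17 (p f q s : ℕ) (hp : p.Prime) (hp7 : 7 ≤ p) (hf : 1 ≤ f) (hq : q = p ^ f)
    (hs : 2 ≤ s) (h : 120 * (s + 1) * (s ^ 2 + 1) = q * (q ^ 2 - 1)) :
    p % 4 = 1 := by
  subst hq
  have hfne : f ≠ 0 := by omega
  have hq7 : 7 ≤ p ^ f := le_trans hp7 (Nat.le_self_pow hfne p)
  have h120 : ¬ p ∣ 120 := by
    intro hd
    have hd' : p ∣ 8 * 15 := by norm_num at hd ⊢; exact hd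
    rcases (hp.dvd_mul).mp hd' with h1 | h1
    · have : p ∣ 2 := hp.dvd_of_dvd_pow (n := 3) (by norm_num at h1 ⊢; exact h1)
      have := Nat.le_of_dvd (by norm_num) this; omega
    · rcases (hp.dvd_mul).mp (show p ∣ 3 * 5 by norm_num at h1 ⊢; exact h1) with h2 | h2
      · have := Nat.le_of_dvd (by norm_num) h2; omega
      · have := Nat.le_of_dvd (by norm_num) h2; omega
  by_cases hB : p ∣ s ^ 2 + 1
  · -- then -1 is a square mod p
    haveI : Fact p.Prime := ⟨hp⟩
    have h0 : ((s : ZMod p)) ^ 2 = -1 := by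
      have : ((s ^ 2 + 1 : ℕ) : ZMod p) = 0 :=
        (ZMod.natCast_eq_zero_iff _ _).mpr hB
      push_cast at this
      linear_combination this
    have hsq : IsSquare (-1 : ZMod p) := ⟨s, by rw [← h0]; ring⟩
    have hne3 : p % 4 ≠ 3 := (ZMod.exists_sq_eq_neg_one_iff).mp hsq
    have hodd : p % 2 = 1 := Nat.odd_iff.mp (hp.odd_of_ne_two (by omega))
    omega
  · -- then p^f ∣ s + 1, size contradiction
    exfalso
    have hpd : p ∣ 120 * (s + 1) * (s ^ 2 + 1) := by
      rw [h]; exact Dvd.dvd.mul_right (dvd_pow_self p hfne) _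
    have hps : p ∣ s + 1 := by
      rcases (hp.dvd_mul).mp hpd with h1 | h1
      · rcases (hp.dvd_mul).mp h1 with h2 | h2
        · exact absurd h2 h120
        · exact h2
      · exact absurd h1 hB
    have cop : Nat.Coprime (p ^ f) (120 * (s ^ 2 + 1)) := by
      apply Nat.Coprime.pow_left
      apply Nat.Coprime.mul_right
      · exact (hp.coprime_iff_not_dvd).mpr h120
      · exact (hp.coprime_iff_not_dvd).mpr hB
    have hdvd : p ^ f ∣ (120 * (s ^ 2 + 1)) * (s + 1) := by
      have : p ^ f ∣ 120 * (s + 1) * (s ^ 2 + 1) := by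
        rw [h]; exact Dvd.dvd.mul_right dvd_rfl _
      calc p ^ f ∣ 120 * (s + 1) * (s ^ 2 + 1) := this
        _ = (120 * (s ^ 2 + 1)) * (s + 1) := by ring
    have hle : p ^ f ≤ s + 1 :=
      Nat.le_of_dvd (by omega) (cop.dvd_of_dvd_mul_left hdvd)
    have hbig : p ^ f * ((p ^ f) ^ 2 - 1) ≤ (s + 1) ^ 3 := by
      calc p ^ f * ((p ^ f) ^ 2 - 1) ≤ p ^ f * (p ^ f) ^ 2 :=
            Nat.mul_le_mul_left _ (Nat.sub_le _ _)
        _ ≤ (s + 1) * (s + 1) ^ 2 :=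
            Nat.mul_le_mul hle (Nat.pow_le_pow_left hle 2)
        _ = (s + 1) ^ 3 := by ring
    rw [← h] at hbig
    nlinarith [hbig, hs]
end

section
/- Let e ≥ 2 be an integer and let r be a prime. Then there is no integer s ≥ 2 such that (2^{2e} − 1)(s+1)(s²+1) = 2^{e(r−1)}·(2^{2er} − 1). -/
lemma geom_nat (x n : ℕ) (hx : 1 ≤ x) :
    (x - 1) * ∑ i ∈ Finset.range n, x ^ i = x ^ n - 1 := by
  induction n with
  | zero => simp
  | succ n ih =>
    rw [Finset.sum_range_succ, Nat.mul_add, ih, Nat.sub_mul, one_mul, pow_succ,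
      mul_comm (x ^ n) x]
    have h1 : 1 ≤ x ^ n := Nat.one_le_pow _ _ hx
    have h2 : x ^ n ≤ x * x ^ n := Nat.le_mul_of_pos_left _ (by omega)
    have key : ∀ a b : ℕ, 1 ≤ a → a ≤ b → a - 1 + (b - a) = b - 1 := by
      intro a b ha hab; omega
    exact key (x ^ n) (x * x ^ n) h1 h2

/-- For every integer `e ≥ 2` and prime `r`, there is no integer `s ≥ 2` with
`(2^(2e) - 1)(s+1)(s²+1) = 2^(e(r-1)) · (2^(2er) - 1)`. -/
theorem stmt19 (e : ℕ) (he : 2 ≤ e) (r : ℕ) (hr : r.Prime) :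
    ¬ ∃ s : ℕ, 2 ≤ s ∧ (2 ^ (2 * e) - 1) * (s + 1) * (s ^ 2 + 1) =
      2 ^ (e * (r - 1)) * (2 ^ (2 * e * r) - 1) := by
  rintro ⟨s, hs, heq⟩
  obtain ⟨r', rfl⟩ : ∃ r', r = r' + 1 := ⟨r - 1, by have := hr.two_le; omega⟩
  have hr' : 1 ≤ r' := by have := hr.two_le; omega
  simp only [Nat.add_sub_cancel] at heq
  set m := e * r' with hm
  have hm2 : 2 ≤ m := le_trans he (Nat.le_mul_of_pos_right e hr')
  have h16 : (16:ℕ) ≤ 2 ^ (2*e) := by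
    calc (16:ℕ) = 2 ^ 4 := rfl
    _ ≤ 2 ^ (2*e) := Nat.pow_le_pow_right (by norm_num) (by omega)
  set S : ℕ := ∑ i ∈ Finset.range r', (2 ^ (2*e)) ^ i with hS
  have hX : (2 ^ (2*e)) ^ r' = (2 ^ m) ^ 2 := by
    rw [← pow_mul, ← pow_mul, hm]; ring_nf
  have hgeom : (2 ^ (2*e) - 1) * (S + (2 ^ m) ^ 2) = 2 ^ (2*e*(r'+1)) - 1 := by
    rw [← hX, ← Finset.sum_range_succ, geom_nat _ _ Nat.one_le_two_pow, ← pow_mul]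
  have key : (s + 1) * (s ^ 2 + 1) = 2 ^ m * (S + (2 ^ m) ^ 2) := by
    apply Nat.eq_of_mul_eq_mul_left (show 0 < 2 ^ (2*e) - 1 by omega)
    rw [← mul_assoc, heq, ← hgeom]; ring
  -- bounds on S
  have hS1 : 1 ≤ S := by
    have := Finset.single_le_sum (f := fun i => (2 ^ (2*e)) ^ i)
      (fun i _ => Nat.zero_le _) (Finset.mem_range.mpr hr')
    simpa using this
  have hgeom2 : (2 ^ (2*e) - 1) * S = (2 ^ m) ^ 2 - 1 := by
    rw [hS, geom_nat _ _ Nat.one_le_two_pow, hX]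
  have hT1 : 1 ≤ (2 ^ m) ^ 2 := Nat.one_le_pow _ _ (Nat.pow_pos (by norm_num))
  have hle : 15 * S ≤ (2 ^ m) ^ 2 - 1 := by
    rw [← hgeom2]; exact Nat.mul_le_mul_right S (by omega)
  have hS15 : 15 * S + 1 ≤ (2 ^ m) ^ 2 := (Nat.le_sub_iff_add_le hT1).mp hle
  -- s is odd
  rcases Nat.even_or_odd s with hev | hod
  · obtain ⟨c, rfl⟩ := hev
    have h2 : 2 ∣ (c + c + 1) * ((c + c) ^ 2 + 1) :=
      key ▸ dvd_mul_of_dvd_left (dvd_pow_self 2 (by omega)) _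
    have hoddP : Odd ((c + c + 1) * ((c + c) ^ 2 + 1)) :=
      Odd.mul ⟨c, by ring⟩ ⟨2*c^2, by ring⟩
    exact (Nat.not_odd_iff_even.mpr ((even_iff_two_dvd).mpr h2)) hoddP
  obtain ⟨c, rfl⟩ := hod
  have hc1 : 1 ≤ c := by omega
  -- extract powers of two
  clear_value m
  obtain ⟨M, rfl⟩ : ∃ M, m = M + 2 := ⟨m - 2, by omega⟩
  set y := 2 ^ M with hy'
  have hy : 1 ≤ y := Nat.one_le_two_pow
  have h2m : 2 ^ (M + 2) = 4 * y := by rw [pow_add]; ring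
  have hform : (2*c + 1 + 1) * ((2*c + 1) ^ 2 + 1) = 4 * ((c+1) * (2*c^2 + 2*c + 1)) := by
    ring
  have hdvd : 2 ^ (M + 2) ∣ (2*c + 1 + 1) * ((2*c + 1) ^ 2 + 1) := key ▸ Dvd.intro _ rfl
  have hdvd2 : y ∣ (c + 1) * (2*c^2 + 2*c + 1) := by
    rw [hform, h2m] at hdvd
    exact (mul_dvd_mul_iff_left (show (4:ℕ) ≠ 0 by norm_num)).mp hdvd
  have hu : Odd (2*c^2 + 2*c + 1) := ⟨c^2 + c, by ring⟩
  have hcop : Nat.Coprime y (2*c^2 + 2*c + 1) :=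
    Nat.Coprime.pow_left M (Nat.coprime_two_left.mpr hu)
  have hdc : y ∣ c + 1 := hcop.dvd_of_dvd_mul_right hdvd2
  obtain ⟨k, hk⟩ := hdc
  have hk1 : 1 ≤ k := by
    rcases Nat.eq_zero_or_pos k with h | h
    · rw [h, mul_zero] at hk; omega
    · exact h
  clear_value y
  -- restate key with y
  have key2 : (2*c + 1 + 1) * ((2*c + 1) ^ 2 + 1) = 4 * y * (S + 16 * y ^ 2) := by
    rw [key, h2m]; ring
  have hS15' : 15 * S + 1 ≤ 16 * y ^ 2 := by
    have h : (2 ^ (M + 2)) ^ 2 = 16 * y ^ 2 := by rw [h2m]; ring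
    rwa [h] at hS15
  clear_value S
  clear heq hgeom hgeom2 hle hX hdvd hdvd2 hT1 hS15 hform key hcop hu hm hm2 h2m h16 hr hr' hS hy' hs
  rcases show k = 1 ∨ k = 2 ∨ 3 ≤ k by omega with hk3 | hk3 | hk3
  · -- k = 1 : s + 1 = 2y
    subst hk3
    rw [mul_one] at hk
    subst hk
    nlinarith [key2, hS1]
  · -- k = 2 : s + 1 = 4y
    subst hk3
    have h4y : 4 * y = 2 * (c + 1) := by omega
    have h1 : 16 * y ^ 2 = (2 * (c + 1)) ^ 2 := by rw [← h4y]; ring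
    rw [h4y, h1] at key2
    nlinarith [key2, hS1]
  · -- k ≥ 3 : s + 1 ≥ 6y
    have h6 : 6 * y ≤ 2*c + 1 + 1 := by
      have h3 := Nat.mul_le_mul_left y hk3
      linarith [hk]
    have hup : (6*y) * ((2*c + 1) ^ 2 + 1) ≤ 4 * y * (S + 16 * y ^ 2) :=
      key2 ▸ Nat.mul_le_mul_right _ h6
    have hcancel : 3 * ((2*c + 1) ^ 2 + 1) ≤ 2 * (S + 16 * y ^ 2) :=
      Nat.le_of_mul_le_mul_left
        (by calc 2 * y * (3 * ((2*c + 1) ^ 2 + 1)) = 6 * y * ((2*c + 1) ^ 2 + 1) := by ring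
              _ ≤ 4 * y * (S + 16 * y ^ 2) := hup
              _ = 2 * y * (2 * (S + 16 * y ^ 2)) := by ring)
        (show 0 < 2 * y by omega)
    have hsq : 36 * y ^ 2 ≤ (2*c + 1 + 1) ^ 2 := by
      calc 36 * y ^ 2 = (6 * y) ^ 2 := by ring
        _ ≤ (2*c + 1 + 1) ^ 2 := Nat.pow_le_pow_left h6 2
    nlinarith [hcancel, hS15', hsq, hy, hS1]
end
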